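/- arXiv:0907.4347 — 13 statements merged into one kernel-verified Lean document; each statement's English description precedes it below -/
import Mathlib

section
/- For points (x1,y1), (x2,y2) on the twisted Edwards curve ax² + y² = 1 + dx²y² over a field k of characteristic ≠ 2, if the denominators 1 + d x1 x2 y1 y2 and 1 − d x1 x2 y1 y2 are nonzero, then the sum point ((x1y2 + x2y1)/(1 + d x1x2y1y2), (y1y2 − a x1x2)/(1 − d x1x2y1y2)) also lies on the curve ax² + y² = 1 + dx²y². -/
/-- the Edwards sum of two points on a twisted Edwards curve lies on the curve. -/
theorem edwards_add_closed {k : Type*} [Field k] (a d x1 y1 x2 y2 : k)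
    (hchar : (2 : k) ≠ 0) (ha : a ≠ 0) (hd : d ≠ 0) (had : a ≠ d)
    (h1 : a * x1 ^ 2 + y1 ^ 2 = 1 + d * x1 ^ 2 * y1 ^ 2)
    (h2 : a * x2 ^ 2 + y2 ^ 2 = 1 + d * x2 ^ 2 * y2 ^ 2)
    (hden1 : 1 + d * x1 * x2 * y1 * y2 ≠ 0)
    (hden2 : 1 - d * x1 * x2 * y1 * y2 ≠ 0) :
    a * ((x1 * y2 + x2 * y1) / (1 + d * x1 * x2 * y1 * y2)) ^ 2
        + ((y1 * y2 - a * x1 * x2) / (1 - d * x1 * x2 * y1 * y2)) ^ 2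
      = 1 + d * ((x1 * y2 + x2 * y1) / (1 + d * x1 * x2 * y1 * y2)) ^ 2
          * ((y1 * y2 - a * x1 * x2) / (1 - d * x1 * x2 * y1 * y2)) ^ 2 := by
  have e1 : 1 + x1 * y2 * x2 * y1 * d ≠ 0 := by convert hden1 using 1; ring
  have e2 : 1 - x1 * y2 * x2 * y1 * d ≠ 0 := by convert hden2 using 1; ring
  field_simp
  linear_combination (y2^4 - 2*d*x2^2*y2^2 - d*y1^2*x2^2*y2^4 - d^2*x2^4*y2^4 + d^2*y1^2*x2^4*y2^4 + d^3*x1^2*y1^2*x2^4*y2^4 + 4*a*x2^2*y2^2 - 2*a*x2^2*y2^4 + 2*a*d*x2^4*y2^4 - a*d*y1^2*x2^4*y2^2 - a*d*x1^2*x2^2*y2^4 + a*d^2*x1^2*x2^4*y2^4 + a^2*x2^4 - 2*a^2*x2^4*y2^2 - a^2*d*x1^2*x2^4*y2^2) * h1 + (1 + y2^2 - y1^2*y2^2 + d*x2^2*y2^2 - 2*d*y1^2*x2^2*y2^2 + d*y1^4*x2^2*y2^2 + a*x2^2 - 2*a*x2^2*y2^2 - a*y1^2*x2^2 + 2*a*y1^2*x2^2*y2^2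 - a*x1^2*y2^2 - 2*a*d*x1^2*x2^2*y2^2 - a^2*x1^2*x2^2 + 2*a^2*x1^2*x2^2*y2^2 + a^2*d*x1^4*x2^2*y2^2) * h2
end

section
/- If (x,y) is a point on the twisted Edwards curve ax² + y² = 1 + dx²y² with x(1−y) ≠ 0, then the point (u,v) with u = ((5a−d)+(a−5d)y)/(12(1−y)) and v = (a−d)(1+y)/(4x(1−y)) satisfies the Weierstrass equation v² = u³ − ((a²+14ad+d²)/48)u − ((a³−33a²d−33ad²+d³)/864). -/
/-- the birational map sends points of the twisted Edwards curve to
points of the associated Weierstrass curve. -/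
theorem edwards_to_weierstrass {k : Type*} [Field k] (a d x y : k)
    (h2 : (2 : k) ≠ 0) (h3 : (3 : k) ≠ 0)
    (ha : a ≠ 0) (hd : d ≠ 0) (had : a ≠ d)
    (hE : a * x ^ 2 + y ^ 2 = 1 + d * x ^ 2 * y ^ 2)
    (hxy : x * (1 - y) ≠ 0) :
    (((a - d) * (1 + y)) / (4 * x * (1 - y))) ^ 2
      = (((5 * a - d) + (a - 5 * d) * y) / (12 * (1 - y))) ^ 3
        - ((a ^ 2 + 14 * a * d + d ^ 2) / 48)
            * (((5 * a - d) + (a - 5 * d) * y) / (12 * (1 - y)))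
        - ((a ^ 3 - 33 * a ^ 2 * d - 33 * a * d ^ 2 + d ^ 3) / 864) := by
  have hx : x ≠ 0 := fun h => hxy (by rw [h]; ring)
  have hy : (1 - y) ≠ 0 := fun h => hxy (by rw [h]; ring)
  have h4 : (4 : k) ≠ 0 := by
    have : (4 : k) = 2 * 2 := by norm_num
    rw [this]; exact mul_ne_zero h2 h2
  have h12 : (12 : k) ≠ 0 := by
    have : (12 : k) = 4 * 3 := by norm_num
    rw [this]; exact mul_ne_zero h4 h3
  have h48 : (48 : k) ≠ 0 := by
    have : (48 : k) = 4 * 12 := by norm_num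
    rw [this]; exact mul_ne_zero h4 h12
  have h864 : (864 : k) ≠ 0 := by
    have : (864 : k) = 48 * 18 := by norm_num
    rw [this]
    exact mul_ne_zero h48 (by
      have : (18 : k) = 2 * 3 * 3 := by norm_num
      rw [this]; exact mul_ne_zero (mul_ne_zero h2 h3) h3)
  have hD1 : 12 * (1 - y) ≠ 0 := mul_ne_zero h12 hy
  have hD2 : 4 * x * (1 - y) ≠ 0 := mul_ne_zero (mul_ne_zero h4 hx) hy
  field_simp [hD1, hD2, h48, h864]
  linear_combination (-71663616 * (a - d) ^ 2 * (1 + y)) * hE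
end

section
/- If (u,v) satisfies v² = u³ + Au + B with A = −(a²+14ad+d²)/48 and B = −(a³−33a²d−33ad²+d³)/864, and v(12u + a − 5d) ≠ 0, then the point (x,y) with x = (6u−(a+d))/(6v) and y = (12u+d−5a)/(12u+a−5d) satisfies ax² + y² = 1 + dx²y². -/
/-- the inverse birational map sends points of the Weierstrass curve
to points of the twisted Edwards curve. -/
theorem weierstrass_to_edwards {k : Type*} [Field k] (a d u v : k)
    (h2 : (2 : k) ≠ 0) (h3 : (3 : k) ≠ 0)
    (ha : a ≠ 0) (hd : d ≠ 0) (had : a ≠ d)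
    (hW : v ^ 2 = u ^ 3 - ((a ^ 2 + 14 * a * d + d ^ 2) / 48) * u
        - ((a ^ 3 - 33 * a ^ 2 * d - 33 * a * d ^ 2 + d ^ 3) / 864))
    (hden : v * (12 * u + a - 5 * d) ≠ 0) :
    a * ((6 * u - (a + d)) / (6 * v)) ^ 2
        + ((12 * u + d - 5 * a) / (12 * u + a - 5 * d)) ^ 2
      = 1 + d * ((6 * u - (a + d)) / (6 * v)) ^ 2
          * ((12 * u + d - 5 * a) / (12 * u + a - 5 * d)) ^ 2 := by
  have hv : v ≠ 0 := fun h => hden (by rw [h]; ring)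
  have hq : (12 * u + a - 5 * d) ≠ 0 := fun h => hden (by rw [h]; ring)
  have h6 : (6 : k) ≠ 0 := by
    have : (6 : k) = 2 * 3 := by norm_num
    rw [this]; exact mul_ne_zero h2 h3
  have h48 : (48 : k) ≠ 0 := by
    have : (48 : k) = 2 * 2 * 2 * 2 * 3 := by norm_num
    rw [this]; simp [h2, h3]
  have h864 : (864 : k) ≠ 0 := by
    have : (864 : k) = 2 * 2 * 2 * 2 * 2 * 3 * 3 * 3 := by norm_num
    rw [this]; simp [h2, h3]
  field_simp at hW ⊢
  have key : (48 : k) * (a * (6 * u - (a + d)) ^ 2 * (12 * u + a - 5 * d) ^ 2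
        + (12 * u + d - 5 * a) ^ 2 * (6 * v) ^ 2)
      = 48 * ((6 * v) ^ 2 * (12 * u + a - 5 * d) ^ 2
        + d * (6 * u - (a + d)) ^ 2 * (12 * u + d - 5 * a) ^ 2) := by
    linear_combination (6 * (d - a) * u + a ^ 2 - d ^ 2) * hW
  have hq' : (u * 12 + a - d * 5) ≠ 0 := by
    rw [show u * 12 + a - d * 5 = 12 * u + a - 5 * d by ring]; exact hq
  field_simp
  exact mul_left_cancel₀ h48 (by linear_combination key)
end

section
/- The maps (x,y) ↦ (((5a−d)+(a−5d)y)/(12(1−y)), (a−d)(1+y)/(4x(1−y))) and (u,v) ↦ ((6u−(a+d))/(6v), (12u+d−5a)/(12u+a−5d)) are mutually inverse on points where both are defined: applying the first map to a point (x,y) on E with x(1−y) ≠ 0 and then the second map (assuming its denominators are nonzero) recovers (x,y). -/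
/-- the two birational maps between the twisted Edwards curve and
the Weierstrass curve are mutually inverse where defined. -/
theorem edwards_weierstrass_inverse {k : Type*} [Field k] (a d x y : k)
    (h2 : (2 : k) ≠ 0) (h3 : (3 : k) ≠ 0)
    (ha : a ≠ 0) (hd : d ≠ 0) (had : a ≠ d)
    (hE : a * x ^ 2 + y ^ 2 = 1 + d * x ^ 2 * y ^ 2)
    (hxy : x * (1 - y) ≠ 0)
    (u v : k)
    (hu : u = ((5 * a - d) + (a - 5 * d) * y) / (12 * (1 - y)))
    (hv : v = ((a - d) * (1 + y)) / (4 * x * (1 - y)))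
    (hv0 : v ≠ 0) (hden : 12 * u + a - 5 * d ≠ 0) :
    (6 * u - (a + d)) / (6 * v) = x ∧
    (12 * u + d - 5 * a) / (12 * u + a - 5 * d) = y := by
  have hx : x ≠ 0 := fun h => hxy (by rw [h]; ring)
  have h1y : (1 : k) - y ≠ 0 := fun h => hxy (by rw [h]; ring)
  have hadne : a - d ≠ 0 := sub_ne_zero.mpr had
  have hy1 : (1 : k) + y ≠ 0 := by
    intro h
    apply hv0
    rw [hv, h]
    simp
  have h4 : (4 : k) ≠ 0 := by
    have := mul_ne_zero h2 h2; norm_num at this ⊢; exact this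
  have h12 : (12 : k) ≠ 0 := by
    have := mul_ne_zero h4 h3; norm_num at this ⊢; exact this
  have h6 : (6 : k) ≠ 0 := by
    have := mul_ne_zero h2 h3; norm_num at this ⊢; exact this
  subst hu hv
  constructor
  · field_simp
    ring
  · rw [div_eq_iff hden]
    field_simp
    ring
end

section
/- The points (u,v) = ((−(a+d) ± 6t)/12, 0), where t² = ad, have order 2 on the Weierstrass curve W: v² = u³ + Au + B with A = −(a²+14ad+d²)/48, B = −(a³−33a²d−33ad²+d³)/864; that is, u = (−(a+d)±6t)/12 is a root of u³ + Au + B. -/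
/-- the points ((−(a+d) ± 6t)/12, 0) with t² = ad are points of
order 2 on the Weierstrass curve, i.e. the u-coordinates are roots of the cubic. -/
theorem weierstrass_order_two_points {k : Type*} [Field k] (a d t : k)
    (h2 : (2 : k) ≠ 0) (h3 : (3 : k) ≠ 0)
    (ha : a ≠ 0) (hd : d ≠ 0) (had : a ≠ d)
    (ht : t ^ 2 = a * d) :
    (((-(a + d) + 6 * t) / 12) ^ 3
        - ((a ^ 2 + 14 * a * d + d ^ 2) / 48) * ((-(a + d) + 6 * t) / 12)
        - ((a ^ 3 - 33 * a ^ 2 * d - 33 * a * d ^ 2 + d ^ 3) / 864) = 0) ∧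
    (((-(a + d) - 6 * t) / 12) ^ 3
        - ((a ^ 2 + 14 * a * d + d ^ 2) / 48) * ((-(a + d) - 6 * t) / 12)
        - ((a ^ 3 - 33 * a ^ 2 * d - 33 * a * d ^ 2 + d ^ 3) / 864) = 0) := by
  have h12 : (12 : k) ≠ 0 := by
    have : (12 : k) = 2 * 2 * 3 := by norm_num
    rw [this]; exact mul_ne_zero (mul_ne_zero h2 h2) h3
  have h48 : (48 : k) ≠ 0 := by
    have : (48 : k) = 12 * 2 * 2 := by norm_num
    rw [this]; exact mul_ne_zero (mul_ne_zero h12 h2) h2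
  have h864 : (864 : k) ≠ 0 := by
    have : (864 : k) = 12 * 12 * 3 * 2 := by norm_num
    rw [this]; exact mul_ne_zero (mul_ne_zero (mul_ne_zero h12 h12) h3) h2
  have ht3 : t ^ 3 = t * (a * d) := by rw [← ht]; ring
  constructor
  · field_simp
    linear_combination (-4478976 * (a + d)) * ht + 8957952 * ht3
  · field_simp
    linear_combination (-4478976 * (a + d)) * ht - 8957952 * ht3
end

section
/- Let (x1,y1), (x2,y2) be points on ax² + y² = 1 + dx²y² with 1 − a d x1² x2² ≠ 0 and all addition-law denominators nonzero. Then the x-coordinate of the Edwards sum satisfies x₊ = (x1 y2 (1 − d x2²) + x2 y1 (1 − d x1²)) / (1 − a d x1² x2²). -/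
/-- Theorem xadd: alternative formula for the x-coordinate of the
Edwards sum. -/
theorem edwards_xadd {k : Type*} [Field k] (a d x1 y1 x2 y2 : k)
    (hchar : (2 : k) ≠ 0) (ha : a ≠ 0) (hd : d ≠ 0) (had : a ≠ d)
    (h1 : a * x1 ^ 2 + y1 ^ 2 = 1 + d * x1 ^ 2 * y1 ^ 2)
    (h2 : a * x2 ^ 2 + y2 ^ 2 = 1 + d * x2 ^ 2 * y2 ^ 2)
    (hden1 : 1 + d * x1 * x2 * y1 * y2 ≠ 0)
    (hden2 : 1 - a * d * x1 ^ 2 * x2 ^ 2 ≠ 0) :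
    (x1 * y2 + x2 * y1) / (1 + d * x1 * x2 * y1 * y2)
      = (x1 * y2 * (1 - d * x2 ^ 2) + x2 * y1 * (1 - d * x1 ^ 2))
          / (1 - a * d * x1 ^ 2 * x2 ^ 2) := by
  rw [div_eq_div_iff hden1 hden2]
  linear_combination (-(d * x1 * x2 ^ 2 * y2)) * h1 + (-(d * x1 ^ 2 * x2 * y1)) * h2
end

section
/- Let (x1,y1), (x2,y2) be points on ax² + y² = 1 + dx²y² with all relevant denominators nonzero. Then the y-coordinate of the Edwards sum satisfies y₊ = ((a−d) y1 y2 − (a − d y1²)(a − d y2²) x1 x2) / (a − d(y1² + y2²) + d y1² y2²). -/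
/-- alternative formula for the y-coordinate of the Edwards sum. -/
theorem edwards_yadd {k : Type*} [Field k] (a d x1 y1 x2 y2 : k)
    (hchar : (2 : k) ≠ 0) (ha : a ≠ 0) (hd : d ≠ 0) (had : a ≠ d)
    (h1 : a * x1 ^ 2 + y1 ^ 2 = 1 + d * x1 ^ 2 * y1 ^ 2)
    (h2 : a * x2 ^ 2 + y2 ^ 2 = 1 + d * x2 ^ 2 * y2 ^ 2)
    (hden1 : 1 - d * x1 * x2 * y1 * y2 ≠ 0)
    (hden2 : a - d * (y1 ^ 2 + y2 ^ 2) + d * y1 ^ 2 * y2 ^ 2 ≠ 0) :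
    (y1 * y2 - a * x1 * x2) / (1 - d * x1 * x2 * y1 * y2)
      = ((a - d) * y1 * y2 - (a - d * y1 ^ 2) * (a - d * y2 ^ 2) * x1 * x2)
          / (a - d * (y1 ^ 2 + y2 ^ 2) + d * y1 ^ 2 * y2 ^ 2) := by
  rw [div_eq_div_iff hden1 hden2]
  have h12 : (a * x1 ^ 2 + y1 ^ 2 - (1 + d * x1 ^ 2 * y1 ^ 2))
      * (a * x2 ^ 2 + y2 ^ 2 - (1 + d * x2 ^ 2 * y2 ^ 2)) = 0 := by
    rw [sub_eq_zero.mpr h1, zero_mul]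
  linear_combination (d * y1 * y2 ^ 3 - d * y1 * y2) * h1
    + (d * y1 ^ 3 * y2 - d * y1 * y2) * h2 - d * y1 * y2 * h12
end

section
/- Let (x1,y1), (x2,y2) be points on ax² + y² = 1 + dx²y² with all relevant denominators nonzero, and let x₊ and x₋ be the x-coordinates of (x1,y1)+(x2,y2) and (x1,y1)−(x2,y2) respectively (where −(x2,y2) = (−x2,y2)). Then x₊ + x₋ = 2 x1 y2 (1 − d x2²) / (1 − a d x1² x2²). -/
/-- Theorem xplusmin: x₊ + x₋ = 2x₁y₂(1 − dx₂²)/(1 − adx₁²x₂²). -/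
theorem edwards_xplus_xminus {k : Type*} [Field k] (a d x1 y1 x2 y2 : k)
    (hchar : (2 : k) ≠ 0) (ha : a ≠ 0) (hd : d ≠ 0) (had : a ≠ d)
    (h1 : a * x1 ^ 2 + y1 ^ 2 = 1 + d * x1 ^ 2 * y1 ^ 2)
    (h2 : a * x2 ^ 2 + y2 ^ 2 = 1 + d * x2 ^ 2 * y2 ^ 2)
    (hden1 : 1 + d * x1 * x2 * y1 * y2 ≠ 0)
    (hden2 : 1 - d * x1 * x2 * y1 * y2 ≠ 0)
    (hden3 : 1 - a * d * x1 ^ 2 * x2 ^ 2 ≠ 0) :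
    (x1 * y2 + x2 * y1) / (1 + d * x1 * x2 * y1 * y2)
        + (x1 * y2 + -x2 * y1) / (1 + d * x1 * (-x2) * y1 * y2)
      = 2 * x1 * y2 * (1 - d * x2 ^ 2) / (1 - a * d * x1 ^ 2 * x2 ^ 2) := by
  have hden2' : 1 + d * x1 * (-x2) * y1 * y2 ≠ 0 := by
    intro h; apply hden2; linear_combination h
  rw [div_add_div _ _ hden1 hden2', div_eq_div_iff (mul_ne_zero hden1 hden2') hden3]
  linear_combination (-2*x1*y2*d*x2^2)*h1 + (2*x1*y2*d^2*x1^2*x2^2*y1^2)*h2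
end

section
/- Let (x1,y1), (x2,y2) be points on ax² + y² = 1 + dx²y² with all relevant denominators nonzero, and let y₊, y₋ be the y-coordinates of (x1,y1)+(x2,y2) and (x1,y1)−(x2,y2). Then y₊ + y₋ = 2(a−d) y1 y2 / (a − d(y1² + y2²) + d y1² y2²). -/
/-- Theorem yplusmin: y₊ + y₋ = 2(a−d)y₁y₂/(a − d(y₁²+y₂²) + dy₁²y₂²). -/
theorem edwards_yplus_yminus {k : Type*} [Field k] (a d x1 y1 x2 y2 : k)
    (hchar : (2 : k) ≠ 0) (ha : a ≠ 0) (hd : d ≠ 0) (had : a ≠ d)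
    (h1 : a * x1 ^ 2 + y1 ^ 2 = 1 + d * x1 ^ 2 * y1 ^ 2)
    (h2 : a * x2 ^ 2 + y2 ^ 2 = 1 + d * x2 ^ 2 * y2 ^ 2)
    (hden1 : 1 - d * x1 * x2 * y1 * y2 ≠ 0)
    (hden2 : 1 + d * x1 * x2 * y1 * y2 ≠ 0)
    (hden3 : a - d * (y1 ^ 2 + y2 ^ 2) + d * y1 ^ 2 * y2 ^ 2 ≠ 0) :
    (y1 * y2 - a * x1 * x2) / (1 - d * x1 * x2 * y1 * y2)
        + (y1 * y2 - a * x1 * (-x2)) / (1 - d * x1 * (-x2) * y1 * y2)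
      = 2 * (a - d) * y1 * y2
          / (a - d * (y1 ^ 2 + y2 ^ 2) + d * y1 ^ 2 * y2 ^ 2) := by
  have hden2' : 1 - d * x1 * (-x2) * y1 * y2 ≠ 0 := by
    have : 1 - d * x1 * (-x2) * y1 * y2 = 1 + d * x1 * x2 * y1 * y2 := by ring
    rw [this]; exact hden2
  rw [div_add_div _ _ hden1 hden2', div_eq_div_iff (mul_ne_zero hden1 hden2') hden3]
  linear_combination (-(2 : k) * y1 * y2 * d * x2 ^ 2 * (a - d * y2 ^ 2)) * h1 +
    (-(2 : k) * y1 * y2 * d * (1 - y1 ^ 2)) * h2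
end

section
/- For every n ≥ 1, the twisted Edwards division polynomial ψ̃ₙ(y) lies in ℤ[a,d,y]; moreover if n is even then (y+1) divides ψ̃ₙ(y). -/
set_option maxHeartbeats 2000000
set_option synthInstance.maxHeartbeats 400000


open MvPolynomial

/-- Theorem int: the twisted Edwards division polynomials ψ̃ₙ,
defined by the initial values and the case-by-case recursions of Theorem 7.1
inside the fraction field of ℤ[a,d,y], lie in ℤ[a,d,y] for all n ≥ 1, and
(y+1) divides ψ̃ₙ when n is even.  Here `X 0 = a`, `X 1 = d`, `X 2 = y`. -/
theorem edwards_division_polynomial_integral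
    (ψ : ℕ → FractionRing (MvPolynomial (Fin 3) ℤ))
    (A D Y : FractionRing (MvPolynomial (Fin 3) ℤ))
    (hA : A = algebraMap (MvPolynomial (Fin 3) ℤ) _ (X 0))
    (hD : D = algebraMap (MvPolynomial (Fin 3) ℤ) _ (X 1))
    (hY : Y = algebraMap (MvPolynomial (Fin 3) ℤ) _ (X 2))
    (h0 : ψ 0 = 0) (h1 : ψ 1 = 1) (h2 : ψ 2 = Y + 1)
    (h3 : ψ 3 = -D * Y ^ 4 - 2 * D * Y ^ 3 + 2 * A * Y + A)
    (h4 : ψ 4 = -2 * D * Y ^ 6 - 2 * D * Y ^ 5 + 2 * A * Y ^ 2 + 2 * A * Y)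
    (hodd0 : ∀ r, r % 4 = 0 → 4 ≤ r → ψ (2 * r + 1)
      = 4 * (A - D) * (A - D * Y ^ 2) ^ 2 * ψ (r + 2) * (ψ r) ^ 3 / (Y + 1) ^ 2
        - ψ (r - 1) * (ψ (r + 1)) ^ 3)
    (hodd1 : ∀ r, r % 4 = 1 → 5 ≤ r → ψ (2 * r + 1)
      = ψ (r + 2) * (ψ r) ^ 3
        - 4 * (A - D * Y ^ 2) ^ 2 * ψ (r - 1) * (ψ (r + 1)) ^ 3 / (Y + 1) ^ 2)
    (hodd2 : ∀ r, r % 4 = 2 → 2 ≤ r → ψ (2 * r + 1)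
      = 4 * (A - D * Y ^ 2) ^ 2 * ψ (r + 2) * (ψ r) ^ 3 / (Y + 1) ^ 2
        - ψ (r - 1) * (ψ (r + 1)) ^ 3)
    (hodd3 : ∀ r, r % 4 = 3 → 3 ≤ r → ψ (2 * r + 1)
      = ψ (r + 2) * (ψ r) ^ 3
        - 4 * (A - D) * (A - D * Y ^ 2) ^ 2 * ψ (r - 1) * (ψ (r + 1)) ^ 3 / (Y + 1) ^ 2)
    (heven0 : ∀ r, r % 4 = 0 → 4 ≤ r → ψ (2 * r)
      = ψ r / (Y + 1) * (ψ (r + 2) * (ψ (r - 1)) ^ 2 - ψ (r - 2) * (ψ (r + 1)) ^ 2))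
    (heven1 : ∀ r, r % 4 = 1 → 5 ≤ r → ψ (2 * r)
      = ψ r / (Y + 1)
          * ((A - D) * ψ (r + 2) * (ψ (r - 1)) ^ 2 - ψ (r - 2) * (ψ (r + 1)) ^ 2))
    (heven2 : ∀ r, r % 4 = 2 → 6 ≤ r → ψ (2 * r)
      = ψ r / (Y + 1) * (ψ (r + 2) * (ψ (r - 1)) ^ 2 - ψ (r - 2) * (ψ (r + 1)) ^ 2))
    (heven3 : ∀ r, r % 4 = 3 → 3 ≤ r → ψ (2 * r)
      = ψ r / (Y + 1)
          * (ψ (r + 2) * (ψ (r - 1)) ^ 2 - (A - D) * ψ (r - 2) * (ψ (r + 1)) ^ 2)) :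
    ∀ n, 1 ≤ n → ∃ p : MvPolynomial (Fin 3) ℤ,
      ψ n = algebraMap (MvPolynomial (Fin 3) ℤ) _ p ∧
      (Even n → (X 2 + 1 : MvPolynomial (Fin 3) ℤ) ∣ p) := by
  have hinj : Function.Injective
      (algebraMap (MvPolynomial (Fin 3) ℤ) (FractionRing (MvPolynomial (Fin 3) ℤ))) :=
    IsFractionRing.injective _ _
  have hX2 : (X 2 + 1 : MvPolynomial (Fin 3) ℤ) ≠ 0 := fun h => by
    simpa using congrArg MvPolynomial.constantCoeff h
  have hY1 : (algebraMap (MvPolynomial (Fin 3) ℤ)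
      (FractionRing (MvPolynomial (Fin 3) ℤ)) (X 2) + 1) ≠ 0 := by
    intro h
    apply hX2
    apply hinj
    simpa using h
  intro n
  induction n using Nat.strong_induction_on with
  | _ n IH =>
    intro hn
    rcases Nat.lt_or_ge n 5 with h5 | h5
    · interval_cases n
      · exact ⟨1, by simp [h1], fun hev => absurd (Nat.even_iff.mp hev) (by omega)⟩
      · refine ⟨X 2 + 1, ?_, fun _ => ⟨1, by ring⟩⟩
        rw [h2, hY]; simp
      · refine ⟨-X 1 * X 2 ^ 4 - 2 * X 1 * X 2 ^ 3 + 2 * X 0 * X 2 + X 0, ?_,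
          fun hev => absurd (Nat.even_iff.mp hev) (by omega)⟩
        rw [h3, hA, hD, hY]
        simp only [map_mul, map_add, map_sub, map_pow, map_one, map_neg, map_ofNat]
      · refine ⟨-2 * X 1 * X 2 ^ 6 - 2 * X 1 * X 2 ^ 5 + 2 * X 0 * X 2 ^ 2 + 2 * X 0 * X 2,
          ?_, fun _ => ⟨2 * X 0 * X 2 - 2 * X 1 * X 2 ^ 5, by ring⟩⟩
        rw [h4, hA, hD, hY]
        simp only [map_mul, map_add, map_sub, map_pow, map_one, map_neg, map_ofNat]
    · rcases Nat.even_or_odd n with he | ho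
      · obtain ⟨r, rfl⟩ := he
        rw [show r + r = 2 * r from by ring]
        have hr3 : 3 ≤ r := by omega
        have hm : r % 4 = 0 ∨ r % 4 = 1 ∨ r % 4 = 2 ∨ r % 4 = 3 := by omega
        rcases hm with hm | hm | hm | hm
        · obtain ⟨pm2, hpm2, hdm2⟩ := IH (r - 2) (by omega) (by omega)
          obtain ⟨s0, rfl⟩ := hdm2 (Nat.even_iff.mpr (by omega))
          obtain ⟨p1, hp1, -⟩ := IH (r - 1) (by omega) (by omega)
          obtain ⟨p2, hp2, hd2⟩ := IH r (by omega) (by omega)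
          obtain ⟨q, rfl⟩ := hd2 (Nat.even_iff.mpr (by omega))
          obtain ⟨p3, hp3, -⟩ := IH (r + 1) (by omega) (by omega)
          obtain ⟨p4, hp4, hd4⟩ := IH (r + 2) (by omega) (by omega)
          obtain ⟨s2, rfl⟩ := hd4 (Nat.even_iff.mpr (by omega))
          refine ⟨(X 2 + 1) * (q * (s2 * p1 ^ 2 - s0 * p3 ^ 2)), ?_, fun _ => ⟨_, rfl⟩⟩
          rw [heven0 r hm (by omega), hpm2, hp1, hp2, hp3, hp4, hY]
          simp only [map_mul, map_add, map_sub, map_pow, map_one, map_neg, map_ofNat]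
          field_simp
        · obtain ⟨pm2, hpm2, -⟩ := IH (r - 2) (by omega) (by omega)
          obtain ⟨p1, hp1, hd1⟩ := IH (r - 1) (by omega) (by omega)
          obtain ⟨q1, rfl⟩ := hd1 (Nat.even_iff.mpr (by omega))
          obtain ⟨p2, hp2, -⟩ := IH r (by omega) (by omega)
          obtain ⟨p3, hp3, hd3⟩ := IH (r + 1) (by omega) (by omega)
          obtain ⟨q2, rfl⟩ := hd3 (Nat.even_iff.mpr (by omega))
          obtain ⟨p4, hp4, -⟩ := IH (r + 2) (by omega) (by omega)
          refine ⟨(X 2 + 1) * (p2 * ((X 0 - X 1) * p4 * q1 ^ 2 - pm2 * q2 ^ 2)), ?_,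
            fun _ => ⟨_, rfl⟩⟩
          rw [heven1 r hm (by omega), hpm2, hp1, hp2, hp3, hp4, hA, hD, hY]
          simp only [map_mul, map_add, map_sub, map_pow, map_one, map_neg, map_ofNat]
          field_simp
        · obtain ⟨pm2, hpm2, hdm2⟩ := IH (r - 2) (by omega) (by omega)
          obtain ⟨s0, rfl⟩ := hdm2 (Nat.even_iff.mpr (by omega))
          obtain ⟨p1, hp1, -⟩ := IH (r - 1) (by omega) (by omega)
          obtain ⟨p2, hp2, hd2⟩ := IH r (by omega) (by omega)
          obtain ⟨q, rfl⟩ := hd2 (Nat.even_iff.mpr (by omega))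
          obtain ⟨p3, hp3, -⟩ := IH (r + 1) (by omega) (by omega)
          obtain ⟨p4, hp4, hd4⟩ := IH (r + 2) (by omega) (by omega)
          obtain ⟨s2, rfl⟩ := hd4 (Nat.even_iff.mpr (by omega))
          refine ⟨(X 2 + 1) * (q * (s2 * p1 ^ 2 - s0 * p3 ^ 2)), ?_, fun _ => ⟨_, rfl⟩⟩
          rw [heven2 r hm (by omega), hpm2, hp1, hp2, hp3, hp4, hY]
          simp only [map_mul, map_add, map_sub, map_pow, map_one, map_neg, map_ofNat]
          field_simp
        · obtain ⟨pm2, hpm2, -⟩ := IH (r - 2) (by omega) (by omega)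
          obtain ⟨p1, hp1, hd1⟩ := IH (r - 1) (by omega) (by omega)
          obtain ⟨q1, rfl⟩ := hd1 (Nat.even_iff.mpr (by omega))
          obtain ⟨p2, hp2, -⟩ := IH r (by omega) (by omega)
          obtain ⟨p3, hp3, hd3⟩ := IH (r + 1) (by omega) (by omega)
          obtain ⟨q2, rfl⟩ := hd3 (Nat.even_iff.mpr (by omega))
          obtain ⟨p4, hp4, -⟩ := IH (r + 2) (by omega) (by omega)
          refine ⟨(X 2 + 1) * (p2 * (p4 * q1 ^ 2 - (X 0 - X 1) * pm2 * q2 ^ 2)), ?_,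
            fun _ => ⟨_, rfl⟩⟩
          rw [heven3 r hm (by omega), hpm2, hp1, hp2, hp3, hp4, hA, hD, hY]
          simp only [map_mul, map_add, map_sub, map_pow, map_one, map_neg, map_ofNat]
          field_simp
      · obtain ⟨r, rfl⟩ := ho
        have hr2 : 2 ≤ r := by omega
        have hm : r % 4 = 0 ∨ r % 4 = 1 ∨ r % 4 = 2 ∨ r % 4 = 3 := by omega
        rcases hm with hm | hm | hm | hm
        · obtain ⟨p1, hp1, -⟩ := IH (r - 1) (by omega) (by omega)
          obtain ⟨p2, hp2, hd2⟩ := IH r (by omega) (by omega)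
          obtain ⟨q, rfl⟩ := hd2 (Nat.even_iff.mpr (by omega))
          obtain ⟨p3, hp3, -⟩ := IH (r + 1) (by omega) (by omega)
          obtain ⟨p4, hp4, -⟩ := IH (r + 2) (by omega) (by omega)
          refine ⟨4 * (X 0 - X 1) * (X 0 - X 1 * X 2 ^ 2) ^ 2 * p4 * q ^ 3 * (X 2 + 1)
            - p1 * p3 ^ 3, ?_, fun hev => absurd (Nat.even_iff.mp hev) (by omega)⟩
          rw [hodd0 r hm (by omega), hp1, hp2, hp3, hp4, hA, hD, hY]
          simp only [map_mul, map_add, map_sub, map_pow, map_one, map_neg, map_ofNat]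
          field_simp
        · obtain ⟨p1, hp1, -⟩ := IH (r - 1) (by omega) (by omega)
          obtain ⟨p2, hp2, -⟩ := IH r (by omega) (by omega)
          obtain ⟨p3, hp3, hd3⟩ := IH (r + 1) (by omega) (by omega)
          obtain ⟨q2, rfl⟩ := hd3 (Nat.even_iff.mpr (by omega))
          obtain ⟨p4, hp4, -⟩ := IH (r + 2) (by omega) (by omega)
          refine ⟨p4 * p2 ^ 3
            - 4 * (X 0 - X 1 * X 2 ^ 2) ^ 2 * p1 * q2 ^ 3 * (X 2 + 1), ?_,
            fun hev => absurd (Nat.even_iff.mp hev) (by omega)⟩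
          rw [hodd1 r hm (by omega), hp1, hp2, hp3, hp4, hA, hD, hY]
          simp only [map_mul, map_add, map_sub, map_pow, map_one, map_neg, map_ofNat]
          field_simp
        · obtain ⟨p1, hp1, -⟩ := IH (r - 1) (by omega) (by omega)
          obtain ⟨p2, hp2, hd2⟩ := IH r (by omega) (by omega)
          obtain ⟨q, rfl⟩ := hd2 (Nat.even_iff.mpr (by omega))
          obtain ⟨p3, hp3, -⟩ := IH (r + 1) (by omega) (by omega)
          obtain ⟨p4, hp4, -⟩ := IH (r + 2) (by omega) (by omega)
          refine ⟨4 * (X 0 - X 1 * X 2 ^ 2) ^ 2 * p4 * q ^ 3 * (X 2 + 1)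
            - p1 * p3 ^ 3, ?_, fun hev => absurd (Nat.even_iff.mp hev) (by omega)⟩
          rw [hodd2 r hm (by omega), hp1, hp2, hp3, hp4, hA, hD, hY]
          simp only [map_mul, map_add, map_sub, map_pow, map_one, map_neg, map_ofNat]
          field_simp
        · obtain ⟨p1, hp1, -⟩ := IH (r - 1) (by omega) (by omega)
          obtain ⟨p2, hp2, -⟩ := IH r (by omega) (by omega)
          obtain ⟨p3, hp3, hd3⟩ := IH (r + 1) (by omega) (by omega)
          obtain ⟨q2, rfl⟩ := hd3 (Nat.even_iff.mpr (by omega))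
          obtain ⟨p4, hp4, -⟩ := IH (r + 2) (by omega) (by omega)
          refine ⟨p4 * p2 ^ 3
            - 4 * (X 0 - X 1) * (X 0 - X 1 * X 2 ^ 2) ^ 2 * p1 * q2 ^ 3 * (X 2 + 1), ?_,
            fun hev => absurd (Nat.even_iff.mp hev) (by omega)⟩
          rw [hodd3 r hm (by omega), hp1, hp2, hp3, hp4, hA, hD, hY]
          simp only [map_mul, map_add, map_sub, map_pow, map_one, map_neg, map_ofNat]
          field_simp
end

section
/- Each twisted Edwards division polynomial ψ̃ₙ(a,d,y), considered as a polynomial in a and d with coefficients in ℤ[y], is homogeneous in (a,d) of degree m(n) − k(n), where m(n) = (n²−1)/2 for n odd, m(n) = (n²−2)/2 for n even, and k(n) = ⌊3n²/8⌋. -/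
open MvPolynomial

set_option maxHeartbeats 1000000
set_option synthInstance.maxHeartbeats 400000

def edwardsM (n : ℕ) : ℕ := if Odd n then (n ^ 2 - 1) / 2 else (n ^ 2 - 2) / 2

def edwardsK (n : ℕ) : ℕ := 3 * n ^ 2 / 8

private def dlt (n : ℕ) : ℕ := edwardsM n - edwardsK n

private lemma dlt0 (u : ℕ) : dlt (4*u) = 2*(u*u) - 1 := by
  have hpar : ¬ Odd (4*u) := by simp [Nat.odd_iff]; omega
  have h : (4*u)^2 = 16*(u*u) := by ring
  simp only [dlt, edwardsM, edwardsK, hpar, if_false, h]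
  omega

private lemma dlt1 (u : ℕ) : dlt (4*u+1) = 2*(u*u) + u := by
  have hpar : Odd (4*u+1) := by simp [Nat.odd_iff]; omega
  have h : (4*u+1)^2 = 16*(u*u) + 8*u + 1 := by ring
  simp only [dlt, edwardsM, edwardsK, hpar, if_true, h]
  omega

private lemma dlt2 (u : ℕ) : dlt (4*u+2) = 2*(u*u) + 2*u := by
  have hpar : ¬ Odd (4*u+2) := by simp [Nat.odd_iff]; omega
  have h : (4*u+2)^2 = 16*(u*u) + 16*u + 4 := by ring
  simp only [dlt, edwardsM, edwardsK, hpar, if_false, h]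
  omega

private lemma dlt3 (u : ℕ) : dlt (4*u+3) = 2*(u*u) + 3*u + 1 := by
  have hpar : Odd (4*u+3) := by simp [Nat.odd_iff]; omega
  have h : (4*u+3)^2 = 16*(u*u) + 24*u + 9 := by ring
  simp only [dlt, edwardsM, edwardsK, hpar, if_true, h]
  omega

private noncomputable abbrev SS : Type := MvPolynomial (Fin 2) (Polynomial ℤ)
private noncomputable abbrev KK : Type := FractionRing SS
private noncomputable def cc : SS := C (Polynomial.X + 1)
private noncomputable def ee : SS := X 0 - X 1
private noncomputable def gg : SS := X 0 - X 1 * (C Polynomial.X)^2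

private lemma hom_cc : cc.IsHomogeneous 0 := isHomogeneous_C _ _
private lemma hom_ee : ee.IsHomogeneous 1 := (isHomogeneous_X _ _).sub (isHomogeneous_X _ _)
private lemma hom_gg : gg.IsHomogeneous 1 :=
  (isHomogeneous_X _ _).sub ((isHomogeneous_X _ _).mul ((isHomogeneous_C _ _).pow 2))
private lemma hom_four : (4 : SS).IsHomogeneous 0 := by
  rw [show (4:SS) = C 4 from (map_ofNat C 4).symm]; exact isHomogeneous_C _ _

private lemma cc_ne : cc ≠ 0 := by
  simp only [cc, Ne, MvPolynomial.C_eq_zero]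
  intro h
  have := congrArg (fun p => Polynomial.coeff p 0) h
  simp at this

private lemma phicc_ne : (algebraMap SS KK) cc ≠ 0 := by
  intro h
  exact cc_ne ((IsFractionRing.to_map_eq_zero_iff (K := KK)).mp h)

private lemma phiy1_ne : (algebraMap SS KK) (C Polynomial.X) + 1 ≠ 0 := by
  have h : (algebraMap SS KK) (C Polynomial.X) + 1 = (algebraMap SS KK) cc := by
    simp [cc, map_add, map_one]
  rw [h]; exact phicc_ne

/-- Lemma hom: each ψ̃ₙ(a,d,y), viewed as a polynomial in a and d
with coefficients in ℤ[y] (i.e. an element of `MvPolynomial (Fin 2) (Polynomial ℤ)`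
with `X 0 = a`, `X 1 = d`, and `C Polynomial.X = y`), is homogeneous in (a,d)
of degree m(n) − k(n). -/
theorem edwards_division_polynomial_homogeneous
    (ψ : ℕ → FractionRing (MvPolynomial (Fin 2) (Polynomial ℤ)))
    (A D Y : FractionRing (MvPolynomial (Fin 2) (Polynomial ℤ)))
    (hA : A = algebraMap (MvPolynomial (Fin 2) (Polynomial ℤ)) _ (X 0))
    (hD : D = algebraMap (MvPolynomial (Fin 2) (Polynomial ℤ)) _ (X 1))
    (hY : Y = algebraMap (MvPolynomial (Fin 2) (Polynomial ℤ)) _ (C Polynomial.X))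
    (h0 : ψ 0 = 0) (h1 : ψ 1 = 1) (h2 : ψ 2 = Y + 1)
    (h3 : ψ 3 = -D * Y ^ 4 - 2 * D * Y ^ 3 + 2 * A * Y + A)
    (h4 : ψ 4 = -2 * D * Y ^ 6 - 2 * D * Y ^ 5 + 2 * A * Y ^ 2 + 2 * A * Y)
    (hodd0 : ∀ r, r % 4 = 0 → 4 ≤ r → ψ (2 * r + 1)
      = 4 * (A - D) * (A - D * Y ^ 2) ^ 2 * ψ (r + 2) * (ψ r) ^ 3 / (Y + 1) ^ 2
        - ψ (r - 1) * (ψ (r + 1)) ^ 3)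
    (hodd1 : ∀ r, r % 4 = 1 → 5 ≤ r → ψ (2 * r + 1)
      = ψ (r + 2) * (ψ r) ^ 3
        - 4 * (A - D * Y ^ 2) ^ 2 * ψ (r - 1) * (ψ (r + 1)) ^ 3 / (Y + 1) ^ 2)
    (hodd2 : ∀ r, r % 4 = 2 → 2 ≤ r → ψ (2 * r + 1)
      = 4 * (A - D * Y ^ 2) ^ 2 * ψ (r + 2) * (ψ r) ^ 3 / (Y + 1) ^ 2
        - ψ (r - 1) * (ψ (r + 1)) ^ 3)
    (hodd3 : ∀ r, r % 4 = 3 → 3 ≤ r → ψ (2 * r + 1)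
      = ψ (r + 2) * (ψ r) ^ 3
        - 4 * (A - D) * (A - D * Y ^ 2) ^ 2 * ψ (r - 1) * (ψ (r + 1)) ^ 3 / (Y + 1) ^ 2)
    (heven0 : ∀ r, r % 4 = 0 → 4 ≤ r → ψ (2 * r)
      = ψ r / (Y + 1) * (ψ (r + 2) * (ψ (r - 1)) ^ 2 - ψ (r - 2) * (ψ (r + 1)) ^ 2))
    (heven1 : ∀ r, r % 4 = 1 → 5 ≤ r → ψ (2 * r)
      = ψ r / (Y + 1)
          * ((A - D) * ψ (r + 2) * (ψ (r - 1)) ^ 2 - ψ (r - 2) * (ψ (r + 1)) ^ 2))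
    (heven2 : ∀ r, r % 4 = 2 → 6 ≤ r → ψ (2 * r)
      = ψ r / (Y + 1) * (ψ (r + 2) * (ψ (r - 1)) ^ 2 - ψ (r - 2) * (ψ (r + 1)) ^ 2))
    (heven3 : ∀ r, r % 4 = 3 → 3 ≤ r → ψ (2 * r)
      = ψ r / (Y + 1)
          * (ψ (r + 2) * (ψ (r - 1)) ^ 2 - (A - D) * ψ (r - 2) * (ψ (r + 1)) ^ 2)) :
    ∀ n, 1 ≤ n → ∃ p : MvPolynomial (Fin 2) (Polynomial ℤ),
      ψ n = algebraMap (MvPolynomial (Fin 2) (Polynomial ℤ)) _ p ∧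
      p.IsHomogeneous (edwardsM n - edwardsK n) := by
  subst hA hD hY
  suffices H : ∀ n : ℕ, 1 ≤ n → ∃ q : SS, q.IsHomogeneous (dlt n) ∧
      ψ n = algebraMap SS KK ((if 2 ∣ n then cc else 1) * q) by
    intro n hn
    obtain ⟨q, hq, he⟩ := H n hn
    refine ⟨(if 2 ∣ n then cc else 1) * q, he, ?_⟩
    have h0' : ((if 2 ∣ n then cc else 1) : SS).IsHomogeneous 0 := by
      split
      · exact hom_cc
      · exact isHomogeneous_one _ _
    rw [show edwardsM n - edwardsK n = 0 + dlt n from by simp [dlt]]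
    exact h0'.mul hq
  intro n
  induction n using Nat.strong_induction_on with
  | _ n IH =>
  intro hn
  by_cases hsmall : n < 5
  · interval_cases n
    · refine ⟨1, ?_, ?_⟩
      · rw [show dlt 1 = 0 from by norm_num [dlt, edwardsM, edwardsK, Nat.odd_iff]]
        exact isHomogeneous_one _ _
      · rw [if_neg (by omega), one_mul, map_one]; exact h1
    · refine ⟨1, ?_, ?_⟩
      · rw [show dlt 2 = 0 from by norm_num [dlt, edwardsM, edwardsK, Nat.odd_iff]]
        exact isHomogeneous_one _ _
      · rw [h2, if_pos (by omega), mul_one]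
        simp [cc, map_add, map_one]
    · refine ⟨C (2*Polynomial.X+1) * X 0 - C (Polynomial.X^4 + 2*Polynomial.X^3) * X 1, ?_, ?_⟩
      · rw [show dlt 3 = 0+1 from by norm_num [dlt, edwardsM, edwardsK, Nat.odd_iff]]
        exact ((isHomogeneous_C _ _).mul (isHomogeneous_X _ _)).sub
          ((isHomogeneous_C _ _).mul (isHomogeneous_X _ _))
      · rw [h3, if_neg (by omega), one_mul]
        simp only [cc, ee, gg, map_mul, map_pow, map_sub, map_add, map_ofNat, map_one]
        ring
    · refine ⟨C (2*Polynomial.X) * X 0 - C (2*Polynomial.X^5) * X 1, ?_, ?_⟩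
      · rw [show dlt 4 = 0+1 from by norm_num [dlt, edwardsM, edwardsK, Nat.odd_iff]]
        exact ((isHomogeneous_C _ _).mul (isHomogeneous_X _ _)).sub
          ((isHomogeneous_C _ _).mul (isHomogeneous_X _ _))
      · rw [h4, if_pos (by omega)]
        simp only [cc, ee, gg, map_mul, map_pow, map_sub, map_add, map_ofNat, map_one]
        ring
  · push_neg at hsmall
    rcases Nat.even_or_odd n with hev | hodd
    · obtain ⟨r, hr⟩ := hev
      have hr' : n = 2*r := by omega
      subst hr'
      have hmod : r % 4 = 0 ∨ r % 4 = 1 ∨ r % 4 = 2 ∨ r % 4 = 3 := by omega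
      rcases hmod with h | h | h | h
      · obtain ⟨w, rfl⟩ : ∃ w, r = 4*w+4 := ⟨r/4 - 1, by omega⟩
        obtain ⟨a, ha⟩ : ∃ a, w*w = a := ⟨_, rfl⟩
        have s1 : (w+1)*(w+1) = a+2*w+1 := by rw [← ha]; ring
        have s2 : (2*w+2)*(2*w+2) = 4*a+8*w+4 := by rw [← ha]; ring
        have kmm : dlt (4*w+4-2) = 2*a+2*w := by
                  rw [show 4*w+4-2 = 4*w+2 by omega, dlt2, ha]
        have km : dlt (4*w+4-1) = 2*a+3*w+1 := by
                  rw [show 4*w+4-1 = 4*w+3 by omega, dlt3, ha]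
        have k0 : dlt (4*w+4) = 2*a+4*w+1 := by
                  rw [show 4*w+4 = 4*(w+1) by omega, dlt0, s1]; omega
        have k1 : dlt (4*w+4+1) = 2*a+5*w+3 := by
                  rw [show 4*w+4+1 = 4*(w+1)+1 by omega, dlt1, s1]; omega
        have k2 : dlt (4*w+4+2) = 2*a+6*w+4 := by
                  rw [show 4*w+4+2 = 4*(w+1)+2 by omega, dlt2, s1]; omega
        have kt : dlt (2*(4*w+4)) = 8*a+16*w+7 := by
                  rw [show 2*(4*w+4) = 4*(2*w+2) by omega, dlt0, s2]; omega
        obtain ⟨qmm, hqmm, hemm⟩ := IH (4*w+4-2) (by omega) (by omega)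
        obtain ⟨qm, hqm, hem⟩ := IH (4*w+4-1) (by omega) (by omega)
        obtain ⟨q0, hq0, he0⟩ := IH (4*w+4) (by omega) (by omega)
        obtain ⟨q1, hq1, he1⟩ := IH (4*w+4+1) (by omega) (by omega)
        obtain ⟨q2, hq2, he2⟩ := IH (4*w+4+2) (by omega) (by omega)
        rw [if_pos (by omega)] at hemm he0 he2
        rw [if_neg (by omega), one_mul] at hem he1
        refine ⟨q0*(q2*qm^2 - qmm*q1^2), ?_, ?_⟩
        · rw [show dlt (2*(4*w+4)) = dlt (4*w+4)+(dlt (4*w+4+2)+dlt (4*w+4-1)*2) from by rw [kt, k0, k2, km]; omega]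
          refine hq0.mul (IsHomogeneous.sub (hq2.mul (hqm.pow 2)) ?_)
          rw [show dlt (4*w+4+2)+dlt (4*w+4-1)*2 = dlt (4*w+4-2)+dlt (4*w+4+1)*2 from by rw [k2, km, kmm, k1]; omega]
          exact hqmm.mul (hq1.pow 2)
        · rw [if_pos (by omega)]
          have hrec := heven0 (4*w+4) h (by omega)
          rw [he0, he1, he2, hem, hemm] at hrec
          rw [hrec]
          have hy1 := phiy1_ne
          field_simp
          simp only [cc, ee, gg, map_mul, map_pow, map_sub, map_add, map_ofNat, map_one]
          ring
      · obtain ⟨w, rfl⟩ : ∃ w, r = 4*w+5 := ⟨r/4 - 1, by omega⟩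
        obtain ⟨a, ha⟩ : ∃ a, w*w = a := ⟨_, rfl⟩
        have s1 : (w+1)*(w+1) = a+2*w+1 := by rw [← ha]; ring
        have s2 : (2*w+2)*(2*w+2) = 4*a+8*w+4 := by rw [← ha]; ring
        have kmm : dlt (4*w+5-2) = 2*a+3*w+1 := by
                  rw [show 4*w+5-2 = 4*w+3 by omega, dlt3, ha]
        have km : dlt (4*w+5-1) = 2*a+4*w+1 := by
                  rw [show 4*w+5-1 = 4*(w+1) by omega, dlt0, s1]; omega
        have k0 : dlt (4*w+5) = 2*a+5*w+3 := by
                  rw [show 4*w+5 = 4*(w+1)+1 by omega, dlt1, s1]; omega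
        have k1 : dlt (4*w+5+1) = 2*a+6*w+4 := by
                  rw [show 4*w+5+1 = 4*(w+1)+2 by omega, dlt2, s1]; omega
        have k2 : dlt (4*w+5+2) = 2*a+7*w+6 := by
                  rw [show 4*w+5+2 = 4*(w+1)+3 by omega, dlt3, s1]; omega
        have kt : dlt (2*(4*w+5)) = 8*a+20*w+12 := by
                  rw [show 2*(4*w+5) = 4*(2*w+2)+2 by omega, dlt2, s2]; omega
        obtain ⟨qmm, hqmm, hemm⟩ := IH (4*w+5-2) (by omega) (by omega)
        obtain ⟨qm, hqm, hem⟩ := IH (4*w+5-1) (by omega) (by omega)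
        obtain ⟨q0, hq0, he0⟩ := IH (4*w+5) (by omega) (by omega)
        obtain ⟨q1, hq1, he1⟩ := IH (4*w+5+1) (by omega) (by omega)
        obtain ⟨q2, hq2, he2⟩ := IH (4*w+5+2) (by omega) (by omega)
        rw [if_pos (by omega)] at hem he1
        rw [if_neg (by omega), one_mul] at hemm he0 he2
        refine ⟨q0*(ee*q2*qm^2 - qmm*q1^2), ?_, ?_⟩
        · rw [show dlt (2*(4*w+5)) = dlt (4*w+5)+(1+dlt (4*w+5+2)+dlt (4*w+5-1)*2) from by rw [kt, k0, k2, km]; omega]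
          refine hq0.mul (IsHomogeneous.sub ((hom_ee.mul hq2).mul (hqm.pow 2)) ?_)
          rw [show 1+dlt (4*w+5+2)+dlt (4*w+5-1)*2 = dlt (4*w+5-2)+dlt (4*w+5+1)*2 from by rw [k2, km, kmm, k1]; omega]
          exact hqmm.mul (hq1.pow 2)
        · rw [if_pos (by omega)]
          have hrec := heven1 (4*w+5) h (by omega)
          rw [he0, he1, he2, hem, hemm] at hrec
          rw [hrec]
          have hy1 := phiy1_ne
          field_simp
          simp only [cc, ee, gg, map_mul, map_pow, map_sub, map_add, map_ofNat, map_one]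
          ring
      · obtain ⟨w, rfl⟩ : ∃ w, r = 4*w+6 := ⟨r/4 - 1, by omega⟩
        obtain ⟨a, ha⟩ : ∃ a, w*w = a := ⟨_, rfl⟩
        have s1 : (w+1)*(w+1) = a+2*w+1 := by rw [← ha]; ring
        have s3 : (w+2)*(w+2) = a+4*w+4 := by rw [← ha]; ring
        have s2 : (2*w+3)*(2*w+3) = 4*a+12*w+9 := by rw [← ha]; ring
        have kmm : dlt (4*w+6-2) = 2*a+4*w+1 := by
                  rw [show 4*w+6-2 = 4*(w+1) by omega, dlt0, s1]; omega
        have km : dlt (4*w+6-1) = 2*a+5*w+3 := by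
                  rw [show 4*w+6-1 = 4*(w+1)+1 by omega, dlt1, s1]; omega
        have k0 : dlt (4*w+6) = 2*a+6*w+4 := by
                  rw [show 4*w+6 = 4*(w+1)+2 by omega, dlt2, s1]; omega
        have k1 : dlt (4*w+6+1) = 2*a+7*w+6 := by
                  rw [show 4*w+6+1 = 4*(w+1)+3 by omega, dlt3, s1]; omega
        have k2 : dlt (4*w+6+2) = 2*a+8*w+7 := by
                  rw [show 4*w+6+2 = 4*(w+2) by omega, dlt0, s3]; omega
        have kt : dlt (2*(4*w+6)) = 8*a+24*w+17 := by
                  rw [show 2*(4*w+6) = 4*(2*w+3) by omega, dlt0, s2]; omega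
        obtain ⟨qmm, hqmm, hemm⟩ := IH (4*w+6-2) (by omega) (by omega)
        obtain ⟨qm, hqm, hem⟩ := IH (4*w+6-1) (by omega) (by omega)
        obtain ⟨q0, hq0, he0⟩ := IH (4*w+6) (by omega) (by omega)
        obtain ⟨q1, hq1, he1⟩ := IH (4*w+6+1) (by omega) (by omega)
        obtain ⟨q2, hq2, he2⟩ := IH (4*w+6+2) (by omega) (by omega)
        rw [if_pos (by omega)] at hemm he0 he2
        rw [if_neg (by omega), one_mul] at hem he1
        refine ⟨q0*(q2*qm^2 - qmm*q1^2), ?_, ?_⟩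
        · rw [show dlt (2*(4*w+6)) = dlt (4*w+6)+(dlt (4*w+6+2)+dlt (4*w+6-1)*2) from by rw [kt, k0, k2, km]; omega]
          refine hq0.mul (IsHomogeneous.sub (hq2.mul (hqm.pow 2)) ?_)
          rw [show dlt (4*w+6+2)+dlt (4*w+6-1)*2 = dlt (4*w+6-2)+dlt (4*w+6+1)*2 from by rw [k2, km, kmm, k1]; omega]
          exact hqmm.mul (hq1.pow 2)
        · rw [if_pos (by omega)]
          have hrec := heven2 (4*w+6) h (by omega)
          rw [he0, he1, he2, hem, hemm] at hrec
          rw [hrec]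
          have hy1 := phiy1_ne
          field_simp
          simp only [cc, ee, gg, map_mul, map_pow, map_sub, map_add, map_ofNat, map_one]
          ring
      · obtain ⟨w, rfl⟩ : ∃ w, r = 4*w+3 := ⟨r/4, by omega⟩
        obtain ⟨a, ha⟩ : ∃ a, w*w = a := ⟨_, rfl⟩
        have s1 : (w+1)*(w+1) = a+2*w+1 := by rw [← ha]; ring
        have s2 : (2*w+1)*(2*w+1) = 4*a+4*w+1 := by rw [← ha]; ring
        have kmm : dlt (4*w+3-2) = 2*a+w := by
                  rw [show 4*w+3-2 = 4*w+1 by omega, dlt1, ha]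
        have km : dlt (4*w+3-1) = 2*a+2*w := by
                  rw [show 4*w+3-1 = 4*w+2 by omega, dlt2, ha]
        have k0 : dlt (4*w+3) = 2*a+3*w+1 := by
                  rw [dlt3, ha]
        have k1 : dlt (4*w+3+1) = 2*a+4*w+1 := by
                  rw [show 4*w+3+1 = 4*(w+1) by omega, dlt0, s1]; omega
        have k2 : dlt (4*w+3+2) = 2*a+5*w+3 := by
                  rw [show 4*w+3+2 = 4*(w+1)+1 by omega, dlt1, s1]; omega
        have kt : dlt (2*(4*w+3)) = 8*a+12*w+4 := by
                  rw [show 2*(4*w+3) = 4*(2*w+1)+2 by omega, dlt2, s2]; omega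
        obtain ⟨qmm, hqmm, hemm⟩ := IH (4*w+3-2) (by omega) (by omega)
        obtain ⟨qm, hqm, hem⟩ := IH (4*w+3-1) (by omega) (by omega)
        obtain ⟨q0, hq0, he0⟩ := IH (4*w+3) (by omega) (by omega)
        obtain ⟨q1, hq1, he1⟩ := IH (4*w+3+1) (by omega) (by omega)
        obtain ⟨q2, hq2, he2⟩ := IH (4*w+3+2) (by omega) (by omega)
        rw [if_pos (by omega)] at hem he1
        rw [if_neg (by omega), one_mul] at hemm he0 he2
        refine ⟨q0*(q2*qm^2 - ee*qmm*q1^2), ?_, ?_⟩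
        · rw [show dlt (2*(4*w+3)) = dlt (4*w+3)+(dlt (4*w+3+2)+dlt (4*w+3-1)*2) from by rw [kt, k0, k2, km]; omega]
          refine hq0.mul (IsHomogeneous.sub (hq2.mul (hqm.pow 2)) ?_)
          rw [show dlt (4*w+3+2)+dlt (4*w+3-1)*2 = 1+dlt (4*w+3-2)+dlt (4*w+3+1)*2 from by rw [k2, km, kmm, k1]; omega]
          exact (hom_ee.mul hqmm).mul (hq1.pow 2)
        · rw [if_pos (by omega)]
          have hrec := heven3 (4*w+3) h (by omega)
          rw [he0, he1, he2, hem, hemm] at hrec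
          rw [hrec]
          have hy1 := phiy1_ne
          field_simp
          simp only [cc, ee, gg, map_mul, map_pow, map_sub, map_add, map_ofNat, map_one]
          ring
    · obtain ⟨r, hr⟩ := hodd
      subst hr
      have hmod : r % 4 = 0 ∨ r % 4 = 1 ∨ r % 4 = 2 ∨ r % 4 = 3 := by omega
      rcases hmod with h | h | h | h
      · obtain ⟨w, rfl⟩ : ∃ w, r = 4*w+4 := ⟨r/4 - 1, by omega⟩
        obtain ⟨a, ha⟩ : ∃ a, w*w = a := ⟨_, rfl⟩
        have s1 : (w+1)*(w+1) = a+2*w+1 := by rw [← ha]; ring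
        have s2 : (2*w+2)*(2*w+2) = 4*a+8*w+4 := by rw [← ha]; ring
        have km : dlt (4*w+4-1) = 2*a+3*w+1 := by
                  rw [show 4*w+4-1 = 4*w+3 by omega, dlt3, ha]
        have k0 : dlt (4*w+4) = 2*a+4*w+1 := by
                  rw [show 4*w+4 = 4*(w+1) by omega, dlt0, s1]; omega
        have k1 : dlt (4*w+4+1) = 2*a+5*w+3 := by
                  rw [show 4*w+4+1 = 4*(w+1)+1 by omega, dlt1, s1]; omega
        have k2 : dlt (4*w+4+2) = 2*a+6*w+4 := by
                  rw [show 4*w+4+2 = 4*(w+1)+2 by omega, dlt2, s1]; omega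
        have kt : dlt (2*(4*w+4)+1) = 8*a+18*w+10 := by
                  rw [show 2*(4*w+4)+1 = 4*(2*w+2)+1 by omega, dlt1, s2]; omega
        obtain ⟨q0, hq0, he0⟩ := IH (4*w+4) (by omega) (by omega)
        obtain ⟨q1, hq1, he1⟩ := IH (4*w+4+1) (by omega) (by omega)
        obtain ⟨q2, hq2, he2⟩ := IH (4*w+4+2) (by omega) (by omega)
        obtain ⟨qm, hqm, hem⟩ := IH (4*w+4-1) (by omega) (by omega)
        rw [if_pos (by omega)] at he0 he2
        rw [if_neg (by omega), one_mul] at he1 hem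
        refine ⟨4*ee*gg^2*cc^2*q2*q0^3 - qm*q1^3, ?_, ?_⟩
        · refine IsHomogeneous.sub ?_ ?_
          · rw [show dlt (2*(4*w+4)+1) = 0+1+1*2+0*2+dlt (4*w+4+2)+dlt (4*w+4)*3 from by rw [kt, k2, k0]; omega]
            exact ((((hom_four.mul hom_ee).mul (hom_gg.pow 2)).mul (hom_cc.pow 2)).mul hq2).mul (hq0.pow 3)
          · rw [show dlt (2*(4*w+4)+1) = dlt (4*w+4-1)+dlt (4*w+4+1)*3 from by rw [kt, km, k1]; omega]
            exact hqm.mul (hq1.pow 3)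
        · rw [if_neg (by omega), one_mul]
          have hrec := hodd0 (4*w+4) h (by omega)
          rw [he0, he1, he2, hem] at hrec
          rw [hrec]
          have hy1 := phiy1_ne
          field_simp
          simp only [cc, ee, gg, map_mul, map_pow, map_sub, map_add, map_ofNat, map_one]
          ring
      · obtain ⟨w, rfl⟩ : ∃ w, r = 4*w+5 := ⟨r/4 - 1, by omega⟩
        obtain ⟨a, ha⟩ : ∃ a, w*w = a := ⟨_, rfl⟩
        have s1 : (w+1)*(w+1) = a+2*w+1 := by rw [← ha]; ring
        have s2 : (2*w+2)*(2*w+2) = 4*a+8*w+4 := by rw [← ha]; ring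
        have km : dlt (4*w+5-1) = 2*a+4*w+1 := by
                  rw [show 4*w+5-1 = 4*(w+1) by omega, dlt0, s1]; omega
        have k0 : dlt (4*w+5) = 2*a+5*w+3 := by
                  rw [show 4*w+5 = 4*(w+1)+1 by omega, dlt1, s1]; omega
        have k1 : dlt (4*w+5+1) = 2*a+6*w+4 := by
                  rw [show 4*w+5+1 = 4*(w+1)+2 by omega, dlt2, s1]; omega
        have k2 : dlt (4*w+5+2) = 2*a+7*w+6 := by
                  rw [show 4*w+5+2 = 4*(w+1)+3 by omega, dlt3, s1]; omega
        have kt : dlt (2*(4*w+5)+1) = 8*a+22*w+15 := by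
                  rw [show 2*(4*w+5)+1 = 4*(2*w+2)+3 by omega, dlt3, s2]; omega
        obtain ⟨q0, hq0, he0⟩ := IH (4*w+5) (by omega) (by omega)
        obtain ⟨q1, hq1, he1⟩ := IH (4*w+5+1) (by omega) (by omega)
        obtain ⟨q2, hq2, he2⟩ := IH (4*w+5+2) (by omega) (by omega)
        obtain ⟨qm, hqm, hem⟩ := IH (4*w+5-1) (by omega) (by omega)
        rw [if_pos (by omega)] at he1 hem
        rw [if_neg (by omega), one_mul] at he0 he2
        refine ⟨q2*q0^3 - 4*gg^2*cc^2*qm*q1^3, ?_, ?_⟩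
        · refine IsHomogeneous.sub ?_ ?_
          · rw [show dlt (2*(4*w+5)+1) = dlt (4*w+5+2)+dlt (4*w+5)*3 from by rw [kt, k2, k0]; omega]
            exact hq2.mul (hq0.pow 3)
          · rw [show dlt (2*(4*w+5)+1) = 0+1*2+0*2+dlt (4*w+5-1)+dlt (4*w+5+1)*3 from by rw [kt, km, k1]; omega]
            exact (((hom_four.mul (hom_gg.pow 2)).mul (hom_cc.pow 2)).mul hqm).mul (hq1.pow 3)
        · rw [if_neg (by omega), one_mul]
          have hrec := hodd1 (4*w+5) h (by omega)
          rw [he0, he1, he2, hem] at hrec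
          rw [hrec]
          have hy1 := phiy1_ne
          field_simp
          simp only [cc, ee, gg, map_mul, map_pow, map_sub, map_add, map_ofNat, map_one]
          ring
      · obtain ⟨w, rfl⟩ : ∃ w, r = 4*w+2 := ⟨r/4, by omega⟩
        obtain ⟨a, ha⟩ : ∃ a, w*w = a := ⟨_, rfl⟩
        have s1 : (w+1)*(w+1) = a+2*w+1 := by rw [← ha]; ring
        have s2 : (2*w+1)*(2*w+1) = 4*a+4*w+1 := by rw [← ha]; ring
        have km : dlt (4*w+2-1) = 2*a+w := by
                  rw [show 4*w+2-1 = 4*w+1 by omega, dlt1, ha]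
        have k0 : dlt (4*w+2) = 2*a+2*w := by
                  rw [dlt2, ha]
        have k1 : dlt (4*w+2+1) = 2*a+3*w+1 := by
                  rw [show 4*w+2+1 = 4*w+3 by omega, dlt3, ha]
        have k2 : dlt (4*w+2+2) = 2*a+4*w+1 := by
                  rw [show 4*w+2+2 = 4*(w+1) by omega, dlt0, s1]; omega
        have kt : dlt (2*(4*w+2)+1) = 8*a+10*w+3 := by
                  rw [show 2*(4*w+2)+1 = 4*(2*w+1)+1 by omega, dlt1, s2]; omega
        obtain ⟨q0, hq0, he0⟩ := IH (4*w+2) (by omega) (by omega)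
        obtain ⟨q1, hq1, he1⟩ := IH (4*w+2+1) (by omega) (by omega)
        obtain ⟨q2, hq2, he2⟩ := IH (4*w+2+2) (by omega) (by omega)
        obtain ⟨qm, hqm, hem⟩ := IH (4*w+2-1) (by omega) (by omega)
        rw [if_pos (by omega)] at he0 he2
        rw [if_neg (by omega), one_mul] at he1 hem
        refine ⟨4*gg^2*cc^2*q2*q0^3 - qm*q1^3, ?_, ?_⟩
        · refine IsHomogeneous.sub ?_ ?_
          · rw [show dlt (2*(4*w+2)+1) = 0+1*2+0*2+dlt (4*w+2+2)+dlt (4*w+2)*3 from by rw [kt, k2, k0]; omega]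
            exact (((hom_four.mul (hom_gg.pow 2)).mul (hom_cc.pow 2)).mul hq2).mul (hq0.pow 3)
          · rw [show dlt (2*(4*w+2)+1) = dlt (4*w+2-1)+dlt (4*w+2+1)*3 from by rw [kt, km, k1]; omega]
            exact hqm.mul (hq1.pow 3)
        · rw [if_neg (by omega), one_mul]
          have hrec := hodd2 (4*w+2) h (by omega)
          rw [he0, he1, he2, hem] at hrec
          rw [hrec]
          have hy1 := phiy1_ne
          field_simp
          simp only [cc, ee, gg, map_mul, map_pow, map_sub, map_add, map_ofNat, map_one]
          ring
      · obtain ⟨w, rfl⟩ : ∃ w, r = 4*w+3 := ⟨r/4, by omega⟩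
        obtain ⟨a, ha⟩ : ∃ a, w*w = a := ⟨_, rfl⟩
        have s1 : (w+1)*(w+1) = a+2*w+1 := by rw [← ha]; ring
        have s2 : (2*w+1)*(2*w+1) = 4*a+4*w+1 := by rw [← ha]; ring
        have km : dlt (4*w+3-1) = 2*a+2*w := by
                  rw [show 4*w+3-1 = 4*w+2 by omega, dlt2, ha]
        have k0 : dlt (4*w+3) = 2*a+3*w+1 := by
                  rw [dlt3, ha]
        have k1 : dlt (4*w+3+1) = 2*a+4*w+1 := by
                  rw [show 4*w+3+1 = 4*(w+1) by omega, dlt0, s1]; omega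
        have k2 : dlt (4*w+3+2) = 2*a+5*w+3 := by
                  rw [show 4*w+3+2 = 4*(w+1)+1 by omega, dlt1, s1]; omega
        have kt : dlt (2*(4*w+3)+1) = 8*a+14*w+6 := by
                  rw [show 2*(4*w+3)+1 = 4*(2*w+1)+3 by omega, dlt3, s2]; omega
        obtain ⟨q0, hq0, he0⟩ := IH (4*w+3) (by omega) (by omega)
        obtain ⟨q1, hq1, he1⟩ := IH (4*w+3+1) (by omega) (by omega)
        obtain ⟨q2, hq2, he2⟩ := IH (4*w+3+2) (by omega) (by omega)
        obtain ⟨qm, hqm, hem⟩ := IH (4*w+3-1) (by omega) (by omega)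
        rw [if_pos (by omega)] at he1 hem
        rw [if_neg (by omega), one_mul] at he0 he2
        refine ⟨q2*q0^3 - 4*ee*gg^2*cc^2*qm*q1^3, ?_, ?_⟩
        · refine IsHomogeneous.sub ?_ ?_
          · rw [show dlt (2*(4*w+3)+1) = dlt (4*w+3+2)+dlt (4*w+3)*3 from by rw [kt, k2, k0]; omega]
            exact hq2.mul (hq0.pow 3)
          · rw [show dlt (2*(4*w+3)+1) = 0+1+1*2+0*2+dlt (4*w+3-1)+dlt (4*w+3+1)*3 from by rw [kt, km, k1]; omega]
            exact ((((hom_four.mul hom_ee).mul (hom_gg.pow 2)).mul (hom_cc.pow 2)).mul hqm).mul (hq1.pow 3)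
        · rw [if_neg (by omega), one_mul]
          have hrec := hodd3 (4*w+3) h (by omega)
          rw [he0, he1, he2, hem] at hrec
          rw [hrec]
          have hy1 := phiy1_ne
          field_simp
          simp only [cc, ee, gg, map_mul, map_pow, map_sub, map_add, map_ofNat, map_one]
          ring
end

section
/- Define polynomials Pₙ(t), Qₙ(t) ∈ ℤ[a,d][t] by P₁ = 1, Q₁ = 1, P₂ = 2(1−dt), Q₂ = 1−adt², with the recursions: for n even, P_{n+1} = 2(1−at)(1−dt)PₙQ_{n−1}Qₙ − P_{n−1}((1−dt)Qₙ² − adt²(1−at)Pₙ²) and Q_{n+1} = Q_{n−1}((1−dt)Qₙ² − adt²(1−at)Pₙ²); for n odd, P_{n+1} = 2(1−dt)PₙQ_{n−1}Qₙ − P_{n−1}(Qₙ² − adt²Pₙ²) and Q_{n+1} = Q_{n−1}(Qₙ² − adt²Pₙ²). Let (x,y) lie on ax²+y²=1+dx²y² and let (xₙ,yₙ) = [n](x,y) under the Edwards group law, with all denominators in the relevant addition-law computations nonzero and Qₙ(x²) ≠ 0 for all n involved. Then xₙ = x·y·Pₙ(x²)/Qₙ(x²) if n is even, and xₙ = x·Pₙ(x²)/Qₙ(x²)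 if n is odd. -/
open Polynomial

private lemma my_cancel {k : Type*} [Field k] {S E : k} (hS : S ≠ 0) (h : S * E = 0) : E = 0 :=
  (mul_eq_zero.mp h).resolve_left hS

private lemma my_nz {k : Type*} [Field k] {a d x y : k} (ha : a ≠ 0) (hd : d ≠ 0) (had : a ≠ d)
    (hE : a * x ^ 2 + y ^ 2 = 1 + d * x ^ 2 * y ^ 2) : 1 - d * x ^ 2 ≠ 0 := by
  intro h
  have hx : x ≠ 0 := by rintro rfl; norm_num at h
  have h2 : a * x ^ 2 = 1 := by linear_combination hE - y ^ 2 * h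
  have h1 : d * x ^ 2 = 1 := by linear_combination -h
  exact had (mul_right_cancel₀ (pow_ne_zero 2 hx) (h2.trans h1.symm))

set_option maxHeartbeats 4000000 in
private lemma my_closure {k : Type*} [Field k] (a d x1 y1 x2 y2 x3 y3 : k)
    (e1 : a * x1 ^ 2 + y1 ^ 2 = 1 + d * x1 ^ 2 * y1 ^ 2)
    (e2 : a * x2 ^ 2 + y2 ^ 2 = 1 + d * x2 ^ 2 * y2 ^ 2)
    (hx3 : x3 * (1 + d * x1 * x2 * y1 * y2) = x1 * y2 + x2 * y1)
    (hy3 : y3 * (1 - d * x1 * x2 * y1 * y2) = y1 * y2 - a * x1 * x2)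
    (hDp : 1 + d * x1 * x2 * y1 * y2 ≠ 0)
    (hDm : 1 - d * x1 * x2 * y1 * y2 ≠ 0)
    (h1 : 1 - d * x1 ^ 2 ≠ 0) (h2 : 1 - d * x2 ^ 2 ≠ 0) :
    a * x3 ^ 2 + y3 ^ 2 = 1 + d * x3 ^ 2 * y3 ^ 2 := by
  have big : (((1 + d * x1 * x2 * y1 * y2) ^ 2 * (1 - d * x1 * x2 * y1 * y2) ^ 2
      * (1 - d * x1 ^ 2) ^ 2 * (1 - d * x2 ^ 2) ^ 2))
      * (a * x3 ^ 2 + y3 ^ 2 - (1 + d * x3 ^ 2 * y3 ^ 2)) = 0 := by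
    linear_combination ((-1)*d*x3*y3^2 + (-1)*d*y1*x2*y3^2 + (-1)*d*x1*y2*y3^2 + 2*d^2*x2^2*x3*y3^2 + 2*d^2*y1*x2^3*y3^2 + 2*d^2*x1*x2^2*y2*y3^2 + 1*d^2*x1*y1*x2*y2*x3*y3^2 + 2*d^2*x1*y1^2*x2^2*y2*y3^2 + 2*d^2*x1^2*x3*y3^2 + 2*d^2*x1^2*y1*x2*y3^2 + 2*d^2*x1^2*y1*x2*y2^2*y3^2 + 2*d^2*x1^3*y2*y3^2 + (-1)*d^3*x2^4*x3*y3^2 + (-1)*d^3*y1*x2^5*y3^2 + (-1)*d^3*x1*x2^4*y2*y3^2 + (-2)*d^3*x1*y1*x2^3*y2*x3*y3^2 + (-4)*d^3*x1*y1^2*x2^4*y2*y3^2 + (-4)*d^3*x1^2*x2^2*x3*y3^2 + (-4)*d^3*x1^2*y1*x2^3*y3^2 + (-4)*d^3*x1^2*y1*x2^3*y2^2*y3^2 + 1*d^3*x1^2*y1^2*x2^2*y2^2*x3*y3^2 + (-1)*d^3*x1^2*y1^3*x2^3*y2^2*y3^2 + (-4)*d^3*x1^3*x2^2*y2*y3^2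 + (-2)*d^3*x1^3*y1*x2*y2*x3*y3^2 + (-4)*d^3*x1^3*y1^2*x2^2*y2*y3^2 + (-1)*d^3*x1^3*y1^2*x2^2*y2^3*y3^2 + (-1)*d^3*x1^4*x3*y3^2 + (-1)*d^3*x1^4*y1*x2*y3^2 + (-4)*d^3*x1^4*y1*x2*y2^2*y3^2 + (-1)*d^3*x1^5*y2*y3^2 + 1*d^4*x1*y1*x2^5*y2*x3*y3^2 + 2*d^4*x1*y1^2*x2^6*y2*y3^2 + 2*d^4*x1^2*x2^4*x3*y3^2 + 2*d^4*x1^2*y1*x2^5*y3^2 + 2*d^4*x1^2*y1*x2^5*y2^2*y3^2 + (-2)*d^4*x1^2*y1^2*x2^4*y2^2*x3*y3^2 + 2*d^4*x1^2*y1^3*x2^5*y2^2*y3^2 + 2*d^4*x1^3*x2^4*y2*y3^2 + 4*d^4*x1^3*y1*x2^3*y2*x3*y3^2 + 8*d^4*x1^3*y1^2*x2^4*y2*y3^2 + 2*d^4*x1^3*y1^2*x2^4*y2^3*y3^2 + (-1)*d^4*x1^3*y1^3*x2^3*y2^3*x3*y3^2 + 2*d^4*x1^4*x2^2*x3*y3^2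 + 2*d^4*x1^4*y1*x2^3*y3^2 + 8*d^4*x1^4*y1*x2^3*y2^2*y3^2 + (-2)*d^4*x1^4*y1^2*x2^2*y2^2*x3*y3^2 + 2*d^4*x1^4*y1^3*x2^3*y2^2*y3^2 + 2*d^4*x1^5*x2^2*y2*y3^2 + 1*d^4*x1^5*y1*x2*y2*x3*y3^2 + 2*d^4*x1^5*y1^2*x2^2*y2*y3^2 + 2*d^4*x1^5*y1^2*x2^2*y2^3*y3^2 + 2*d^4*x1^6*y1*x2*y2^2*y3^2 + 1*d^5*x1^2*y1^2*x2^6*y2^2*x3*y3^2 + (-1)*d^5*x1^2*y1^3*x2^7*y2^2*y3^2 + (-2)*d^5*x1^3*y1*x2^5*y2*x3*y3^2 + (-4)*d^5*x1^3*y1^2*x2^6*y2*y3^2 + (-1)*d^5*x1^3*y1^2*x2^6*y2^3*y3^2 + 2*d^5*x1^3*y1^3*x2^5*y2^3*x3*y3^2 + (-1)*d^5*x1^4*x2^4*x3*y3^2 + (-1)*d^5*x1^4*y1*x2^5*y3^2 + (-4)*d^5*x1^4*y1*x2^5*y2^2*y3^2 + 4*d^5*x1^4*y1^2*x2^4*y2^2*x3*y3^2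 + (-4)*d^5*x1^4*y1^3*x2^5*y2^2*y3^2 + (-1)*d^5*x1^5*x2^4*y2*y3^2 + (-2)*d^5*x1^5*y1*x2^3*y2*x3*y3^2 + (-4)*d^5*x1^5*y1^2*x2^4*y2*y3^2 + (-4)*d^5*x1^5*y1^2*x2^4*y2^3*y3^2 + 2*d^5*x1^5*y1^3*x2^3*y2^3*x3*y3^2 + (-4)*d^5*x1^6*y1*x2^3*y2^2*y3^2 + 1*d^5*x1^6*y1^2*x2^2*y2^2*x3*y3^2 + (-1)*d^5*x1^6*y1^3*x2^3*y2^2*y3^2 + (-1)*d^5*x1^7*y1^2*x2^2*y2^3*y3^2 + (-1)*d^6*x1^3*y1^3*x2^7*y2^3*x3*y3^2 + (-2)*d^6*x1^4*y1^2*x2^6*y2^2*x3*y3^2 + 2*d^6*x1^4*y1^3*x2^7*y2^2*y3^2 + 1*d^6*x1^5*y1*x2^5*y2*x3*y3^2 + 2*d^6*x1^5*y1^2*x2^6*y2*y3^2 + 2*d^6*x1^5*y1^2*x2^6*y2^3*y3^2 + (-4)*d^6*x1^5*y1^3*x2^5*y2^3*x3*y3^2 + 2*d^6*x1^6*y1*x2^5*y2^2*y3^2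 + (-2)*d^6*x1^6*y1^2*x2^4*y2^2*x3*y3^2 + 2*d^6*x1^6*y1^3*x2^5*y2^2*y3^2 + 2*d^6*x1^7*y1^2*x2^4*y2^3*y3^2 + (-1)*d^6*x1^7*y1^3*x2^3*y2^3*x3*y3^2 + 2*d^7*x1^5*y1^3*x2^7*y2^3*x3*y3^2 + 1*d^7*x1^6*y1^2*x2^6*y2^2*x3*y3^2 + (-1)*d^7*x1^6*y1^3*x2^7*y2^2*y3^2 + (-1)*d^7*x1^7*y1^2*x2^6*y2^3*y3^2 + 2*d^7*x1^7*y1^3*x2^5*y2^3*x3*y3^2 + (-1)*d^8*x1^7*y1^3*x2^7*y2^3*x3*y3^2 + 1*a*x3 + 1*a*y1*x2 + 1*a*x1*y2 + (-2)*a*d*x2^2*x3 + (-2)*a*d*y1*x2^3 + (-2)*a*d*x1*x2^2*y2 + (-1)*a*d*x1*y1*x2*y2*x3 + (-2)*a*d*x1*y1^2*x2^2*y2 + (-2)*a*d*x1^2*x3 + (-2)*a*d*x1^2*y1*x2 + (-2)*a*d*x1^2*y1*x2*y2^2 + (-2)*a*d*x1^3*y2 + 1*a*d^2*x2^4*x3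 + 1*a*d^2*y1*x2^5 + 1*a*d^2*x1*x2^4*y2 + 2*a*d^2*x1*y1*x2^3*y2*x3 + 4*a*d^2*x1*y1^2*x2^4*y2 + 4*a*d^2*x1^2*x2^2*x3 + 4*a*d^2*x1^2*y1*x2^3 + 4*a*d^2*x1^2*y1*x2^3*y2^2 + (-1)*a*d^2*x1^2*y1^2*x2^2*y2^2*x3 + 1*a*d^2*x1^2*y1^3*x2^3*y2^2 + 4*a*d^2*x1^3*x2^2*y2 + 2*a*d^2*x1^3*y1*x2*y2*x3 + 4*a*d^2*x1^3*y1^2*x2^2*y2 + 1*a*d^2*x1^3*y1^2*x2^2*y2^3 + 1*a*d^2*x1^4*x3 + 1*a*d^2*x1^4*y1*x2 + 4*a*d^2*x1^4*y1*x2*y2^2 + 1*a*d^2*x1^5*y2 + (-1)*a*d^3*x1*y1*x2^5*y2*x3 + (-2)*a*d^3*x1*y1^2*x2^6*y2 + (-2)*a*d^3*x1^2*x2^4*x3 + (-2)*a*d^3*x1^2*y1*x2^5 + (-2)*a*d^3*x1^2*y1*x2^5*y2^2 + 2*a*d^3*x1^2*y1^2*x2^4*y2^2*x3 + (-2)*a*d^3*x1^2*y1^3*x2^5*y2^2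 + (-2)*a*d^3*x1^3*x2^4*y2 + (-4)*a*d^3*x1^3*y1*x2^3*y2*x3 + (-8)*a*d^3*x1^3*y1^2*x2^4*y2 + (-2)*a*d^3*x1^3*y1^2*x2^4*y2^3 + 1*a*d^3*x1^3*y1^3*x2^3*y2^3*x3 + (-2)*a*d^3*x1^4*x2^2*x3 + (-2)*a*d^3*x1^4*y1*x2^3 + (-8)*a*d^3*x1^4*y1*x2^3*y2^2 + 2*a*d^3*x1^4*y1^2*x2^2*y2^2*x3 + (-2)*a*d^3*x1^4*y1^3*x2^3*y2^2 + (-2)*a*d^3*x1^5*x2^2*y2 + (-1)*a*d^3*x1^5*y1*x2*y2*x3 + (-2)*a*d^3*x1^5*y1^2*x2^2*y2 + (-2)*a*d^3*x1^5*y1^2*x2^2*y2^3 + (-2)*a*d^3*x1^6*y1*x2*y2^2 + (-1)*a*d^4*x1^2*y1^2*x2^6*y2^2*x3 + 1*a*d^4*x1^2*y1^3*x2^7*y2^2 + 2*a*d^4*x1^3*y1*x2^5*y2*x3 + 4*a*d^4*x1^3*y1^2*x2^6*y2 + 1*a*d^4*x1^3*y1^2*x2^6*y2^3 + (-2)*a*d^4*x1^3*y1^3*x2^5*y2^3*x3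 + 1*a*d^4*x1^4*x2^4*x3 + 1*a*d^4*x1^4*y1*x2^5 + 4*a*d^4*x1^4*y1*x2^5*y2^2 + (-4)*a*d^4*x1^4*y1^2*x2^4*y2^2*x3 + 4*a*d^4*x1^4*y1^3*x2^5*y2^2 + 1*a*d^4*x1^5*x2^4*y2 + 2*a*d^4*x1^5*y1*x2^3*y2*x3 + 4*a*d^4*x1^5*y1^2*x2^4*y2 + 4*a*d^4*x1^5*y1^2*x2^4*y2^3 + (-2)*a*d^4*x1^5*y1^3*x2^3*y2^3*x3 + 4*a*d^4*x1^6*y1*x2^3*y2^2 + (-1)*a*d^4*x1^6*y1^2*x2^2*y2^2*x3 + 1*a*d^4*x1^6*y1^3*x2^3*y2^2 + 1*a*d^4*x1^7*y1^2*x2^2*y2^3 + 1*a*d^5*x1^3*y1^3*x2^7*y2^3*x3 + 2*a*d^5*x1^4*y1^2*x2^6*y2^2*x3 + (-2)*a*d^5*x1^4*y1^3*x2^7*y2^2 + (-1)*a*d^5*x1^5*y1*x2^5*y2*x3 + (-2)*a*d^5*x1^5*y1^2*x2^6*y2 + (-2)*a*d^5*x1^5*y1^2*x2^6*y2^3 +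 4*a*d^5*x1^5*y1^3*x2^5*y2^3*x3 + (-2)*a*d^5*x1^6*y1*x2^5*y2^2 + 2*a*d^5*x1^6*y1^2*x2^4*y2^2*x3 + (-2)*a*d^5*x1^6*y1^3*x2^5*y2^2 + (-2)*a*d^5*x1^7*y1^2*x2^4*y2^3 + 1*a*d^5*x1^7*y1^3*x2^3*y2^3*x3 + (-2)*a*d^6*x1^5*y1^3*x2^7*y2^3*x3 + (-1)*a*d^6*x1^6*y1^2*x2^6*y2^2*x3 + 1*a*d^6*x1^6*y1^3*x2^7*y2^2 + 1*a*d^6*x1^7*y1^2*x2^6*y2^3 + (-2)*a*d^6*x1^7*y1^3*x2^5*y2^3*x3 + 1*a*d^7*x1^7*y1^3*x2^7*y2^3*x3) * hx3 + (1*y3 + 1*y1*y2 + (-2)*d*x2^2*y3 + (-2)*d*y1*x2^2*y2 + (-1)*d*y1^2*x2^2*y3 + (-1)*d*y1^3*x2^2*y2 + (-1)*d*x1*y1*x2*y2*y3 + (-2)*d*x1^2*y3 + (-1)*d*x1^2*y2^2*y3 + (-2)*d*x1^2*y1*y2 + (-1)*d*x1^2*y1*y2^3 + 1*d^2*x2^4*y3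 + 1*d^2*y1*x2^4*y2 + 2*d^2*y1^2*x2^4*y3 + 2*d^2*y1^3*x2^4*y2 + 2*d^2*x1*y1*x2^3*y2*y3 + 1*d^2*x1*y1^3*x2^3*y2*y3 + 4*d^2*x1^2*x2^2*y3 + 2*d^2*x1^2*x2^2*y2^2*y3 + 4*d^2*x1^2*y1*x2^2*y2 + 2*d^2*x1^2*y1*x2^2*y2^3 + 2*d^2*x1^2*y1^2*x2^2*y3 + 1*d^2*x1^2*y1^2*x2^2*y2^2*y3 + 2*d^2*x1^2*y1^3*x2^2*y2 + 1*d^2*x1^2*y1^3*x2^2*y2^3 + 2*d^2*x1^3*y1*x2*y2*y3 + 1*d^2*x1^3*y1*x2*y2^3*y3 + 1*d^2*x1^4*y3 + 2*d^2*x1^4*y2^2*y3 + 1*d^2*x1^4*y1*y2 + 2*d^2*x1^4*y1*y2^3 + (-1)*d^3*y1^2*x2^6*y3 + (-1)*d^3*y1^3*x2^6*y2 + (-1)*d^3*x1*y1*x2^5*y2*y3 + (-2)*d^3*x1*y1^3*x2^5*y2*y3 + (-2)*d^3*x1^2*x2^4*y3 + (-1)*d^3*x1^2*x2^4*y2^2*y3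 + (-2)*d^3*x1^2*y1*x2^4*y2 + (-1)*d^3*x1^2*y1*x2^4*y2^3 + (-4)*d^3*x1^2*y1^2*x2^4*y3 + (-2)*d^3*x1^2*y1^2*x2^4*y2^2*y3 + (-4)*d^3*x1^2*y1^3*x2^4*y2 + (-2)*d^3*x1^2*y1^3*x2^4*y2^3 + (-4)*d^3*x1^3*y1*x2^3*y2*y3 + (-2)*d^3*x1^3*y1*x2^3*y2^3*y3 + (-2)*d^3*x1^3*y1^3*x2^3*y2*y3 + (-1)*d^3*x1^3*y1^3*x2^3*y2^3*y3 + (-2)*d^3*x1^4*x2^2*y3 + (-4)*d^3*x1^4*x2^2*y2^2*y3 + (-2)*d^3*x1^4*y1*x2^2*y2 + (-4)*d^3*x1^4*y1*x2^2*y2^3 + (-1)*d^3*x1^4*y1^2*x2^2*y3 + (-2)*d^3*x1^4*y1^2*x2^2*y2^2*y3 + (-1)*d^3*x1^4*y1^3*x2^2*y2 + (-2)*d^3*x1^4*y1^3*x2^2*y2^3 + (-1)*d^3*x1^5*y1*x2*y2*y3 + (-2)*d^3*x1^5*y1*x2*y2^3*y3 + (-1)*d^3*x1^6*y2^2*y3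 + (-1)*d^3*x1^6*y1*y2^3 + 1*d^4*x1*y1^3*x2^7*y2*y3 + 2*d^4*x1^2*y1^2*x2^6*y3 + 1*d^4*x1^2*y1^2*x2^6*y2^2*y3 + 2*d^4*x1^2*y1^3*x2^6*y2 + 1*d^4*x1^2*y1^3*x2^6*y2^3 + 2*d^4*x1^3*y1*x2^5*y2*y3 + 1*d^4*x1^3*y1*x2^5*y2^3*y3 + 4*d^4*x1^3*y1^3*x2^5*y2*y3 + 2*d^4*x1^3*y1^3*x2^5*y2^3*y3 + 1*d^4*x1^4*x2^4*y3 + 2*d^4*x1^4*x2^4*y2^2*y3 + 1*d^4*x1^4*y1*x2^4*y2 + 2*d^4*x1^4*y1*x2^4*y2^3 + 2*d^4*x1^4*y1^2*x2^4*y3 + 4*d^4*x1^4*y1^2*x2^4*y2^2*y3 + 2*d^4*x1^4*y1^3*x2^4*y2 + 4*d^4*x1^4*y1^3*x2^4*y2^3 + 2*d^4*x1^5*y1*x2^3*y2*y3 + 4*d^4*x1^5*y1*x2^3*y2^3*y3 + 1*d^4*x1^5*y1^3*x2^3*y2*y3 + 2*d^4*x1^5*y1^3*x2^3*y2^3*y3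 + 2*d^4*x1^6*x2^2*y2^2*y3 + 2*d^4*x1^6*y1*x2^2*y2^3 + 1*d^4*x1^6*y1^2*x2^2*y2^2*y3 + 1*d^4*x1^6*y1^3*x2^2*y2^3 + 1*d^4*x1^7*y1*x2*y2^3*y3 + (-2)*d^5*x1^3*y1^3*x2^7*y2*y3 + (-1)*d^5*x1^3*y1^3*x2^7*y2^3*y3 + (-1)*d^5*x1^4*y1^2*x2^6*y3 + (-2)*d^5*x1^4*y1^2*x2^6*y2^2*y3 + (-1)*d^5*x1^4*y1^3*x2^6*y2 + (-2)*d^5*x1^4*y1^3*x2^6*y2^3 + (-1)*d^5*x1^5*y1*x2^5*y2*y3 + (-2)*d^5*x1^5*y1*x2^5*y2^3*y3 + (-2)*d^5*x1^5*y1^3*x2^5*y2*y3 + (-4)*d^5*x1^5*y1^3*x2^5*y2^3*y3 + (-1)*d^5*x1^6*x2^4*y2^2*y3 + (-1)*d^5*x1^6*y1*x2^4*y2^3 + (-2)*d^5*x1^6*y1^2*x2^4*y2^2*y3 + (-2)*d^5*x1^6*y1^3*x2^4*y2^3 + (-2)*d^5*x1^7*y1*x2^3*y2^3*y3 + (-1)*d^5*x1^7*y1^3*x2^3*y2^3*y3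 + 1*d^6*x1^5*y1^3*x2^7*y2*y3 + 2*d^6*x1^5*y1^3*x2^7*y2^3*y3 + 1*d^6*x1^6*y1^2*x2^6*y2^2*y3 + 1*d^6*x1^6*y1^3*x2^6*y2^3 + 1*d^6*x1^7*y1*x2^5*y2^3*y3 + 2*d^6*x1^7*y1^3*x2^5*y2^3*y3 + (-1)*d^7*x1^7*y1^3*x2^7*y2^3*y3 + (-1)*a*x1*x2 + 2*a*d*x1*x2^3 + 1*a*d*x1*y1^2*x2^3 + 2*a*d*x1^3*x2 + 1*a*d*x1^3*x2*y2^2 + (-1)*a*d^2*x1*x2^5 + (-2)*a*d^2*x1*y1^2*x2^5 + (-4)*a*d^2*x1^3*x2^3 + (-2)*a*d^2*x1^3*x2^3*y2^2 + (-2)*a*d^2*x1^3*y1^2*x2^3 + (-1)*a*d^2*x1^3*y1^2*x2^3*y2^2 + (-1)*a*d^2*x1^5*x2 + (-2)*a*d^2*x1^5*x2*y2^2 + 1*a*d^3*x1*y1^2*x2^7 + 2*a*d^3*x1^3*x2^5 + 1*a*d^3*x1^3*x2^5*y2^2 + 4*a*d^3*x1^3*y1^2*x2^5 + 2*a*d^3*x1^3*y1^2*x2^5*y2^2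 + 2*a*d^3*x1^5*x2^3 + 4*a*d^3*x1^5*x2^3*y2^2 + 1*a*d^3*x1^5*y1^2*x2^3 + 2*a*d^3*x1^5*y1^2*x2^3*y2^2 + 1*a*d^3*x1^7*x2*y2^2 + (-2)*a*d^4*x1^3*y1^2*x2^7 + (-1)*a*d^4*x1^3*y1^2*x2^7*y2^2 + (-1)*a*d^4*x1^5*x2^5 + (-2)*a*d^4*x1^5*x2^5*y2^2 + (-2)*a*d^4*x1^5*y1^2*x2^5 + (-4)*a*d^4*x1^5*y1^2*x2^5*y2^2 + (-2)*a*d^4*x1^7*x2^3*y2^2 + (-1)*a*d^4*x1^7*y1^2*x2^3*y2^2 + 1*a*d^5*x1^5*y1^2*x2^7 + 2*a*d^5*x1^5*y1^2*x2^7*y2^2 + 1*a*d^5*x1^7*x2^5*y2^2 + 2*a*d^5*x1^7*y1^2*x2^5*y2^2 + (-1)*a*d^6*x1^7*y1^2*x2^7*y2^2) * hy3 + (1*y2^2 + (-3)*d*x2^2*y2^2 + (-1)*d*y1^2*x2^2*y2^2 + (-1)*d*x1^2*y2^2 + (-1)*d*x1^2*y2^4 + 3*d^2*x2^4*y2^2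 + 2*d^2*y1^2*x2^4*y2^2 + 4*d^2*x1^2*x2^2*y2^2 + 3*d^2*x1^2*x2^2*y2^4 + 1*d^2*x1^2*y1^2*x2^2*y2^2 + 1*d^2*x1^2*y1^2*x2^2*y2^4 + 1*d^2*x1^4*y2^4 + (-1)*d^3*x2^6*y2^2 + (-1)*d^3*y1^2*x2^6*y2^2 + (-5)*d^3*x1^2*x2^4*y2^2 + (-3)*d^3*x1^2*x2^4*y2^4 + (-2)*d^3*x1^2*y1^2*x2^4*y2^2 + (-2)*d^3*x1^2*y1^2*x2^4*y2^4 + (-2)*d^3*x1^4*x2^2*y2^2 + (-2)*d^3*x1^4*x2^2*y2^4 + (-1)*d^3*x1^4*y1^2*x2^2*y2^4 + 2*d^4*x1^2*x2^6*y2^2 + 1*d^4*x1^2*x2^6*y2^4 + 1*d^4*x1^2*y1^2*x2^6*y2^2 + 1*d^4*x1^2*y1^2*x2^6*y2^4 + 4*d^4*x1^4*x2^4*y2^2 + 1*d^4*x1^4*y1^2*x2^4*y2^4 + (-2)*d^5*x1^4*x2^6*y2^2 + 2*d^5*x1^4*x2^6*y2^4 + 1*d^5*x1^4*y1^2*x2^6*y2^4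 + 1*d^5*x1^6*y1^2*x2^4*y2^4 + (-1)*d^6*x1^4*x2^8*y2^4 + (-1)*d^6*x1^4*y1^2*x2^8*y2^4 + (-2)*d^6*x1^6*y1^2*x2^6*y2^4 + 1*d^7*x1^6*y1^2*x2^8*y2^4 + 1*a*x2^2 + (-2)*a*d*x2^4 + (-1)*a*d*x1^2*x2^2 + (-3)*a*d*x1^2*x2^2*y2^2 + 1*a*d^2*x2^6 + 2*a*d^2*x1^2*x2^4 + 7*a*d^2*x1^2*x2^4*y2^2 + 1*a*d^2*x1^2*y1^2*x2^4*y2^2 + 4*a*d^2*x1^4*x2^2*y2^2 + (-1)*a*d^3*x1^2*x2^6 + (-5)*a*d^3*x1^2*x2^6*y2^2 + (-2)*a*d^3*x1^2*y1^2*x2^6*y2^2 + (-8)*a*d^3*x1^4*x2^4*y2^2 + (-1)*a*d^3*x1^4*y1^2*x2^4*y2^2 + (-1)*a*d^3*x1^6*x2^2*y2^4 + 1*a*d^4*x1^2*x2^8*y2^2 + 1*a*d^4*x1^2*y1^2*x2^8*y2^2 + 4*a*d^4*x1^4*x2^6*y2^2 + 2*a*d^4*x1^4*y1^2*x2^6*y2^2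 + 3*a*d^4*x1^6*x2^4*y2^4 + (-1)*a*d^5*x1^4*y1^2*x2^8*y2^2 + (-3)*a*d^5*x1^6*x2^6*y2^4 + 1*a*d^6*x1^6*x2^8*y2^4 + (-1)*a^2*d*x1^2*x2^4 + 2*a^2*d^2*x1^2*x2^6 + 1*a^2*d^2*x1^4*x2^4 + (-1)*a^2*d^3*x1^2*x2^8 + (-2)*a^2*d^3*x1^4*x2^6 + (-1)*a^2*d^3*x1^6*x2^4*y2^2 + 1*a^2*d^4*x1^4*x2^8 + 2*a^2*d^4*x1^6*x2^6*y2^2 + (-1)*a^2*d^5*x1^6*x2^8*y2^2) * e1 + (1 + (-2)*d*x2^2 + (-2)*d*x1^2 + (-1)*d*x1^2*y2^2 + 1*d^2*x2^4 + 4*d^2*x1^2*x2^2 + 2*d^2*x1^2*x2^2*y2^2 + 1*d^2*x1^4 + 1*d^2*x1^4*y2^2 + (-2)*d^3*x1^2*x2^4 + (-1)*d^3*x1^2*x2^4*y2^2 + (-2)*d^3*x1^4*x2^2 + (-1)*d^3*x1^4*x2^2*y2^2 + 1*d^4*x1^4*x2^4 + (-1)*d^4*x1^4*x2^4*y2^2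 + 1*d^5*x1^4*x2^6*y2^2 + (-1)*a*d*x1^2*x2^2 + 1*a*d*x1^4*y2^2 + 2*a*d^2*x1^2*x2^4 + 1*a*d^2*x1^4*x2^2 + (-2)*a*d^2*x1^4*x2^2*y2^2 + (-1)*a*d^2*x1^6*y2^2 + (-1)*a*d^3*x1^2*x2^6 + (-2)*a*d^3*x1^4*x2^4 + 1*a*d^3*x1^4*x2^4*y2^2 + 1*a*d^4*x1^4*x2^6 + 3*a*d^4*x1^6*x2^4*y2^2 + (-2)*a*d^5*x1^6*x2^6*y2^2 + 1*a^2*d*x1^4*x2^2 + (-2)*a^2*d^2*x1^4*x2^4 + (-1)*a^2*d^2*x1^6*x2^2 + 1*a^2*d^3*x1^4*x2^6 + 2*a^2*d^3*x1^6*x2^4 + 1*a^2*d^3*x1^8*x2^2*y2^2 + (-1)*a^2*d^4*x1^6*x2^6 + (-2)*a^2*d^4*x1^8*x2^4*y2^2 + 1*a^2*d^5*x1^8*x2^6*y2^2) * e2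
  have fin := my_cancel (mul_ne_zero (mul_ne_zero (mul_ne_zero (pow_ne_zero 2 hDp)
    (pow_ne_zero 2 hDm)) (pow_ne_zero 2 h1)) (pow_ne_zero 2 h2)) big
  linear_combination fin

set_option maxHeartbeats 1000000 in
private lemma my_sub {k : Type*} [Field k] (a d x1 y1 x2 y2 x3 y3 : k)
    (e1 : a * x1 ^ 2 + y1 ^ 2 = 1 + d * x1 ^ 2 * y1 ^ 2)
    (e2 : a * x2 ^ 2 + y2 ^ 2 = 1 + d * x2 ^ 2 * y2 ^ 2)
    (hx3 : x3 * (1 + d * x1 * x2 * y1 * y2) = x1 * y2 + x2 * y1)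
    (hy3 : y3 * (1 - d * x1 * x2 * y1 * y2) = y1 * y2 - a * x1 * x2)
    (hDp : 1 + d * x1 * x2 * y1 * y2 ≠ 0)
    (hDm : 1 - d * x1 * x2 * y1 * y2 ≠ 0)
    (h1 : 1 - d * x1 ^ 2 ≠ 0) (h2 : 1 - d * x2 ^ 2 ≠ 0) :
    x1 * (1 - d * x3 * x2 * y3 * y2) = x3 * y2 - x2 * y3 := by
  have big : (((1 + d * x1 * x2 * y1 * y2) * (1 - d * x1 * x2 * y1 * y2)
      * (1 - d * x1 ^ 2) * (1 - d * x2 ^ 2)))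
      * (x1 * (1 - d * x3 * x2 * y3 * y2) - (x3 * y2 - x2 * y3)) = 0 := by
    linear_combination ((-1)*y2 + 1*d*x2^2*y2 + (-1)*d*x1*x2*y2*y3 + 1*d*x1*y1*x2*y2^2 + 1*d*x1^2*y2 + 1*d^2*x1*x2^3*y2*y3 + (-1)*d^2*x1*y1*x2^3*y2^2 + (-1)*d^2*x1^2*x2^2*y2 + 1*d^2*x1^2*y1*x2^2*y2^2*y3 + 1*d^2*x1^3*x2*y2*y3 + (-1)*d^2*x1^3*y1*x2*y2^2 + (-1)*d^3*x1^2*y1*x2^4*y2^2*y3 + (-1)*d^3*x1^3*x2^3*y2*y3 + 1*d^3*x1^3*y1*x2^3*y2^2 + (-1)*d^3*x1^4*y1*x2^2*y2^2*y3 + 1*d^4*x1^4*y1*x2^4*y2^2*y3) * hx3 + (1*x2 + (-1)*d*x2^3 + (-1)*d*x1^2*x2 + (-1)*d*x1^2*x2*y2^2 + 1*d^2*x1^2*x2^3 + 1*d^2*x1^2*x2^3*y2^2 + 1*d^2*x1^4*x2*y2^2 + (-1)*d^3*x1^4*x2^3*y2^2) * hy3 + (1*d*x1*x2^2*y2^2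 + (-1)*d^2*x1*x2^4*y2^2 + (-1)*d^2*x1^3*x2^2*y2^2 + 1*d^3*x1^3*x2^4*y2^2) * e1 + ((-1)*x1 + 1*d*x1*x2^2 + 1*d*x1^3 + (-1)*d^2*x1^3*x2^2) * e2
  have fin := my_cancel (mul_ne_zero (mul_ne_zero (mul_ne_zero hDp hDm) h1) h2) big
  linear_combination fin

set_option maxHeartbeats 1000000 in
private lemma my_key {k : Type*} [Field k] (a d x y u v xm xq : k)
    (e1 : a * x ^ 2 + y ^ 2 = 1 + d * x ^ 2 * y ^ 2)
    (e2 : a * u ^ 2 + v ^ 2 = 1 + d * u ^ 2 * v ^ 2)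
    (hxq : xq * (1 + d * u * x * v * y) = u * y + x * v)
    (hxm : xm * (1 - d * u * x * v * y) = u * y - x * v)
    (hDp : 1 + d * u * x * v * y ≠ 0)
    (hDm : 1 - d * u * x * v * y ≠ 0)
    (h1 : 1 - d * x ^ 2 ≠ 0) (h2 : 1 - d * u ^ 2 ≠ 0) :
    xq * (1 - a * d * x ^ 2 * u ^ 2)
      = 2 * (1 - d * x ^ 2) * u * y - xm * (1 - a * d * x ^ 2 * u ^ 2) := by
  have big : (((1 + d * u * x * v * y) * (1 - d * u * x * v * y)
      * (1 - d * x ^ 2) * (1 - d * u ^ 2)))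
      * (xq * (1 - a * d * x ^ 2 * u ^ 2)
        - (2 * (1 - d * x ^ 2) * u * y - xm * (1 - a * d * x ^ 2 * u ^ 2))) = 0 := by
    linear_combination (1 + (-1)*d*u^2 + (-1)*d*x*y*u*v + (-1)*d*x^2 + 1*d^2*x*y*u^3*v + 1*d^2*x^2*u^2 + 1*d^2*x^3*y*u*v + (-1)*d^3*x^3*y*u^3*v + (-1)*a*d*x^2*u^2 + 1*a*d^2*x^2*u^4 + 1*a*d^2*x^3*y*u^3*v + 1*a*d^2*x^4*u^2 + (-1)*a*d^3*x^3*y*u^5*v + (-1)*a*d^3*x^4*u^4 + (-1)*a*d^3*x^5*y*u^3*v + 1*a*d^4*x^5*y*u^5*v) * hxq + (1 + (-1)*d*u^2 + 1*d*x*y*u*v + (-1)*d*x^2 + (-1)*d^2*x*y*u^3*v + 1*d^2*x^2*u^2 + (-1)*d^2*x^3*y*u*v + 1*d^3*x^3*y*u^3*v + (-1)*a*d*x^2*u^2 + 1*a*d^2*x^2*u^4 + (-1)*a*d^2*x^3*y*u^3*v + 1*a*d^2*x^4*u^2 + 1*a*d^3*x^3*y*u^5*v + (-1)*a*d^3*x^4*u^4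 + 1*a*d^3*x^5*y*u^3*v + (-1)*a*d^4*x^5*y*u^5*v) * hxm + (2*d^2*x^2*y*u^3*v^2 + (-2)*d^3*x^2*y*u^5*v^2 + (-2)*d^3*x^4*y*u^3*v^2 + 2*d^4*x^4*y*u^5*v^2) * e1 + ((-2)*d*x^2*y*u + 2*d^2*x^2*y*u^3 + 2*d^2*x^4*y*u + (-2)*d^3*x^4*y*u^3) * e2
  have fin := my_cancel (mul_ne_zero (mul_ne_zero (mul_ne_zero hDp hDm) h1) h2) big
  linear_combination fin

set_option maxHeartbeats 4000000 in
/-- Theorem PQ: with Pₙ, Qₙ defined by the stated recursions,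
the x-coordinate of [n](x,y) under the Edwards group law equals
x·y·Pₙ(x²)/Qₙ(x²) for n even and x·Pₙ(x²)/Qₙ(x²) for n odd. -/
theorem edwards_xn_PQ {k : Type*} [Field k] (a d x y : k)
    (hchar : (2 : k) ≠ 0) (ha : a ≠ 0) (hd : d ≠ 0) (had : a ≠ d)
    (hE : a * x ^ 2 + y ^ 2 = 1 + d * x ^ 2 * y ^ 2)
    (P Q : ℕ → Polynomial k)
    (hP1 : P 1 = 1) (hQ1 : Q 1 = 1)
    (hP2 : P 2 = C 2 * (1 - C d * X))
    (hQ2 : Q 2 = 1 - C (a * d) * X ^ 2)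
    (hPeven : ∀ n, 2 ≤ n → Even n → P (n + 1)
      = C 2 * (1 - C a * X) * (1 - C d * X) * P n * Q (n - 1) * Q n
        - P (n - 1) * ((1 - C d * X) * (Q n) ^ 2
            - C (a * d) * X ^ 2 * (1 - C a * X) * (P n) ^ 2))
    (hQeven : ∀ n, 2 ≤ n → Even n → Q (n + 1)
      = Q (n - 1) * ((1 - C d * X) * (Q n) ^ 2
          - C (a * d) * X ^ 2 * (1 - C a * X) * (P n) ^ 2))
    (hPodd : ∀ n, 2 ≤ n → Odd n → P (n + 1)
      = C 2 * (1 - C d * X) * P n * Q (n - 1) * Q n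
        - P (n - 1) * ((Q n) ^ 2 - C (a * d) * X ^ 2 * (P n) ^ 2))
    (hQodd : ∀ n, 2 ≤ n → Odd n → Q (n + 1)
      = Q (n - 1) * ((Q n) ^ 2 - C (a * d) * X ^ 2 * (P n) ^ 2))
    (pts : ℕ → k × k)
    (hpts1 : pts 1 = (x, y))
    (hptsS : ∀ n, 1 ≤ n → pts (n + 1)
      = (((pts n).1 * y + x * (pts n).2) / (1 + d * (pts n).1 * x * (pts n).2 * y),
         ((pts n).2 * y - a * (pts n).1 * x) / (1 - d * (pts n).1 * x * (pts n).2 * y)))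
    (hden : ∀ n, 1 ≤ n → 1 + d * (pts n).1 * x * (pts n).2 * y ≠ 0
        ∧ 1 - d * (pts n).1 * x * (pts n).2 * y ≠ 0)
    (hQne : ∀ n, 1 ≤ n → (Q n).eval (x ^ 2) ≠ 0) :
    ∀ n, 1 ≤ n → (pts n).1
      = if Even n then x * y * (P n).eval (x ^ 2) / (Q n).eval (x ^ 2)
        else x * (P n).eval (x ^ 2) / (Q n).eval (x ^ 2) := by
  have hnz : 1 - d * x ^ 2 ≠ 0 := my_nz ha hd had hE
  -- all points stay on the curve
  have oncurve : ∀ n, 1 ≤ n →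
      a * (pts n).1 ^ 2 + (pts n).2 ^ 2 = 1 + d * (pts n).1 ^ 2 * (pts n).2 ^ 2 := by
    intro n hn
    induction n, hn using Nat.le_induction with
    | base => rw [hpts1]; exact hE
    | succ m hm ih =>
      have e := hptsS m hm
      have hDp := (hden m hm).1
      have hDm := (hden m hm).2
      have hx3 : (pts (m+1)).1 * (1 + d * (pts m).1 * x * (pts m).2 * y)
          = (pts m).1 * y + x * (pts m).2 := by
        rw [e]; exact div_mul_cancel₀ _ hDp
      have hy3 : (pts (m+1)).2 * (1 - d * (pts m).1 * x * (pts m).2 * y)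
          = (pts m).2 * y - a * (pts m).1 * x := by
        rw [e]; exact div_mul_cancel₀ _ hDm
      exact my_closure a d (pts m).1 (pts m).2 x y (pts (m+1)).1 (pts (m+1)).2
        ih hE hx3 hy3 hDp hDm (my_nz ha hd had ih) hnz
  have main : ∀ n, 1 ≤ n →
      ((pts n).1 = if Even n then x * y * (P n).eval (x ^ 2) / (Q n).eval (x ^ 2)
          else x * (P n).eval (x ^ 2) / (Q n).eval (x ^ 2)) ∧
      ((pts (n+1)).1 = if Even (n+1) then x * y * (P (n+1)).eval (x ^ 2) / (Q (n+1)).eval (x ^ 2)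
          else x * (P (n+1)).eval (x ^ 2) / (Q (n+1)).eval (x ^ 2)) := by
    intro n hn
    induction n, hn using Nat.le_induction with
    | base =>
      constructor
      · rw [if_neg (by decide : ¬ Even 1), hpts1, hP1, hQ1]
        simp
      · -- n = 2
        simp only [show (1:ℕ)+1 = 2 from rfl]
        rw [if_pos (by decide : Even 2), hP2, hQ2]
        have hDp2 : (1 : k) + d * x * x * y * y ≠ 0 := by
          have h := (hden 1 le_rfl).1; rw [hpts1] at h; exact h
        have e := hptsS 1 le_rfl
        rw [show (1:ℕ)+1 = 2 from rfl, hpts1] at e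
        have hq : (pts 2).1 * (1 + d * x * x * y * y) = x * y + x * y := by
          rw [e]; exact div_mul_cancel₀ _ hDp2
        have hq2ne : (1 : k) - a * d * (x ^ 2) ^ 2 ≠ 0 := by
          have h := hQne 2 (by norm_num)
          rw [hQ2] at h
          simp only [eval_sub, eval_one, eval_mul, eval_C, eval_pow, eval_X] at h
          exact h
        simp only [eval_mul, eval_sub, eval_one, eval_C, eval_pow, eval_X]
        rw [eq_div_iff hq2ne]
        have big : ((1 + d * x * x * y * y) * (1 - d * x ^ 2))
            * ((pts 2).1 * (1 - a * d * (x ^ 2) ^ 2) - x * y * (2 * (1 - d * x ^ 2))) = 0 := by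
          linear_combination (1 + (-1)*d*x^2 + (-1)*a*d*x^4 + 1*a*d^2*x^6) * hq + ((-2)*d*x^3*y + 2*d^2*x^5*y) * hE
        have fin := my_cancel (mul_ne_zero hDp2 hnz) big
        linear_combination fin
    | succ m hm ih =>
      refine ⟨ih.2, ?_⟩
      have hm1 : 1 ≤ m + 1 := by omega
      have hcurven := oncurve m hm
      have hcurveN := oncurve (m+1) hm1
      have hDpm := (hden m hm).1
      have hDmm := (hden m hm).2
      have hDpN := (hden (m+1) hm1).1
      have hDmN := (hden (m+1) hm1).2
      have em := hptsS m hm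
      have hx3 : (pts (m+1)).1 * (1 + d * (pts m).1 * x * (pts m).2 * y)
          = (pts m).1 * y + x * (pts m).2 := by
        rw [em]; exact div_mul_cancel₀ _ hDpm
      have hy3 : (pts (m+1)).2 * (1 - d * (pts m).1 * x * (pts m).2 * y)
          = (pts m).2 * y - a * (pts m).1 * x := by
        rw [em]; exact div_mul_cancel₀ _ hDmm
      have hsub : (pts m).1 * (1 - d * (pts (m+1)).1 * x * (pts (m+1)).2 * y)
          = (pts (m+1)).1 * y - x * (pts (m+1)).2 :=
        my_sub a d (pts m).1 (pts m).2 x y (pts (m+1)).1 (pts (m+1)).2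
          hcurven hE hx3 hy3 hDpm hDmm (my_nz ha hd had hcurven) hnz
      have eN := hptsS (m+1) hm1
      have hxq : (pts (m+1+1)).1 * (1 + d * (pts (m+1)).1 * x * (pts (m+1)).2 * y)
          = (pts (m+1)).1 * y + x * (pts (m+1)).2 := by
        rw [eN]; exact div_mul_cancel₀ _ hDpN
      have hkey : (pts (m+1+1)).1 * (1 - a * d * x ^ 2 * (pts (m+1)).1 ^ 2)
          = 2 * (1 - d * x ^ 2) * (pts (m+1)).1 * y
            - (pts m).1 * (1 - a * d * x ^ 2 * (pts (m+1)).1 ^ 2) :=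
        my_key a d x y (pts (m+1)).1 (pts (m+1)).2 (pts m).1 (pts (m+1+1)).1
          hE hcurveN hxq hsub hDpN hDmN hnz (my_nz ha hd had hcurveN)
      have hq0 := hQne m hm
      have hq1 := hQne (m+1) hm1
      by_cases hNe : Even (m+1)
      · -- middle index even
        have hmodd : ¬ Even m := Nat.even_add_one.mp hNe
        have hm2 : ¬ Even (m+1+1) := by
          rw [Nat.even_add_one]; exact not_not_intro hNe
        have ihm : (pts m).1 = x * (P m).eval (x ^ 2) / (Q m).eval (x ^ 2) := by
          have h := ih.1; rwa [if_neg hmodd] at h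
        have ihN : (pts (m+1)).1 = x * y * (P (m+1)).eval (x ^ 2) / (Q (m+1)).eval (x ^ 2) := by
          have h := ih.2; rwa [if_pos hNe] at h
        have hxm2 : (pts m).1 * ((Q m).eval (x^2)) = x * ((P m).eval (x^2)) := by
          rw [ihm]; exact div_mul_cancel₀ _ hq0
        have hu2 : (pts (m+1)).1 * ((Q (m+1)).eval (x^2)) = x * y * ((P (m+1)).eval (x^2)) := by
          rw [ihN]; exact div_mul_cancel₀ _ hq1
        have hQrec := hQeven (m+1) (by omega) hNe
        have hPrec := hPeven (m+1) (by omega) hNe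
        simp only [Nat.add_sub_cancel] at hQrec hPrec
        have bigE : (((Q (m+1)).eval (x^2)) ^ 2 * (1 - d * x ^ 2))
            * (((1 - d * x ^ 2) * ((Q (m+1)).eval (x^2)) ^ 2
                - a * d * (x ^ 2) ^ 2 * (1 - a * x ^ 2) * ((P (m+1)).eval (x^2)) ^ 2)
              - (1 - d * x ^ 2) * ((Q (m+1)).eval (x^2)) ^ 2
                * (1 - a * d * x ^ 2 * (pts (m+1)).1 ^ 2)) = 0 := by
          linear_combination (1*a*d*x^2*(pts (m+1)).1*((Q (m+1)).eval (x^2))^3 + 1*a*d*x^3*y*((P (m+1)).eval (x^2))*((Q (m+1)).eval (x^2))^2 + (-2)*a*d^2*x^4*(pts (m+1)).1*((Q (m+1)).eval (x^2))^3 + (-2)*a*d^2*x^5*y*((P (m+1)).eval (x^2))*((Q (m+1)).eval (x^2))^2 + 1*a*d^3*x^6*(pts (m+1)).1*((Q (m+1)).eval (x^2))^3 + 1*a*d^3*x^7*y*((P (m+1)).eval (x^2))*((Q (m+1)).eval (x^2))^2) * hu2 + (1*a*d*x^4*((P (m+1)).eval (x^2))^2*((Q (m+1)).eval (x^2))^2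 + (-1)*a*d^2*x^6*((P (m+1)).eval (x^2))^2*((Q (m+1)).eval (x^2))^2) * hE
        have hEeq := my_cancel (mul_ne_zero (pow_ne_zero 2 hq1) hnz) bigE
        have hQval : (Q (m+1+1)).eval (x ^ 2)
            = (Q m).eval (x ^ 2) * ((1 - d * x ^ 2) * ((Q (m+1)).eval (x^2)) ^ 2
                * (1 - a * d * x ^ 2 * (pts (m+1)).1 ^ 2)) := by
          rw [hQrec]
          simp only [eval_mul, eval_sub, eval_add, eval_pow, eval_one, eval_C, eval_X]
          linear_combination ((Q m).eval (x^2)) * hEeq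
        have hgne : (1 : k) - a * d * x ^ 2 * (pts (m+1)).1 ^ 2 ≠ 0 := by
          intro h0
          exact hQne (m+1+1) (by omega) (by rw [hQval, h0, mul_zero, mul_zero])
        rw [if_neg hm2, eq_div_iff (hQne (m+1+1) (by omega)), hQrec, hPrec]
        simp only [eval_mul, eval_sub, eval_add, eval_pow, eval_one, eval_C, eval_X,
          eval_ofNat]
        have bigF : ((1 - a * d * x ^ 2 * (pts (m+1)).1 ^ 2) * ((Q m).eval (x^2))
            * ((Q (m+1)).eval (x^2)) ^ 2 * (1 - d * x ^ 2))
            * ((pts (m+1+1)).1 * (((Q m).eval (x^2)) * ((1 - d * x ^ 2) * ((Q (m+1)).eval (x^2)) ^ 2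
                - a * d * (x ^ 2) ^ 2 * (1 - a * x ^ 2) * ((P (m+1)).eval (x^2)) ^ 2))
              - x * (2 * (1 - a * x ^ 2) * (1 - d * x ^ 2) * ((P (m+1)).eval (x^2))
                  * ((Q m).eval (x^2)) * ((Q (m+1)).eval (x^2))
                - ((P m).eval (x^2)) * ((1 - d * x ^ 2) * ((Q (m+1)).eval (x^2)) ^ 2
                  - a * d * (x ^ 2) ^ 2 * (1 - a * x ^ 2) * ((P (m+1)).eval (x^2)) ^ 2))) = 0 := by
          linear_combination (1*((Q m).eval (x^2))^2*((Q (m+1)).eval (x^2))^4 + (-2)*d*x^2*((Q m).eval (x^2))^2*((Q (m+1)).eval (x^2))^4 + 1*d^2*x^4*((Q m).eval (x^2))^2*((Q (m+1)).eval (x^2))^4 + (-1)*a*d*x^4*((Q m).eval (x^2))^2*((P (m+1)).eval (x^2))^2*((Q (m+1)).eval (x^2))^2 + 1*a*d^2*x^6*((Q m).eval (x^2))^2*((P (m+1)).eval (x^2))^2*((Q (m+1)).eval (x^2))^2 + 1*a^2*d*x^6*((Q m).eval (x^2))^2*((P (m+1)).eval (x^2))^2*((Q (m+1)).eval (x^2))^2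 + (-1)*a^2*d^2*x^8*((Q m).eval (x^2))^2*((P (m+1)).eval (x^2))^2*((Q (m+1)).eval (x^2))^2) * hkey + ((-1)*((Q m).eval (x^2))*((Q (m+1)).eval (x^2))^4 + 2*d*x^2*((Q m).eval (x^2))*((Q (m+1)).eval (x^2))^4 + (-1)*d^2*x^4*((Q m).eval (x^2))*((Q (m+1)).eval (x^2))^4 + 1*a*d*x^2*(pts (m+1)).1^2*((Q m).eval (x^2))*((Q (m+1)).eval (x^2))^4 + 1*a*d*x^4*((Q m).eval (x^2))*((P (m+1)).eval (x^2))^2*((Q (m+1)).eval (x^2))^2 + (-2)*a*d^2*x^4*(pts (m+1)).1^2*((Q m).eval (x^2))*((Q (m+1)).eval (x^2))^4 + (-1)*a*d^2*x^6*((Q m).eval (x^2))*((P (m+1)).eval (x^2))^2*((Q (m+1)).eval (x^2))^2 + 1*a*d^3*x^6*(pts (m+1)).1^2*((Q m).eval (x^2))*((Q (m+1)).eval (x^2))^4 + (-1)*a^2*d*x^6*((Q m).eval (x^2))*((P (m+1)).eval (x^2))^2*((Q (m+1)).eval (x^2))^2 + (-1)*a^2*d^2*x^6*(pts (m+1)).1^2*((Q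 m).eval (x^2))*((P (m+1)).eval (x^2))^2*((Q (m+1)).eval (x^2))^2 + 1*a^2*d^2*x^8*((Q m).eval (x^2))*((P (m+1)).eval (x^2))^2*((Q (m+1)).eval (x^2))^2 + 1*a^2*d^3*x^8*(pts (m+1)).1^2*((Q m).eval (x^2))*((P (m+1)).eval (x^2))^2*((Q (m+1)).eval (x^2))^2 + 1*a^3*d^2*x^8*(pts (m+1)).1^2*((Q m).eval (x^2))*((P (m+1)).eval (x^2))^2*((Q (m+1)).eval (x^2))^2 + (-1)*a^3*d^3*x^10*(pts (m+1)).1^2*((Q m).eval (x^2))*((P (m+1)).eval (x^2))^2*((Q (m+1)).eval (x^2))^2) * hxm2 + (2*y*((Q m).eval (x^2))^2*((Q (m+1)).eval (x^2))^3 + (-6)*d*x^2*y*((Q m).eval (x^2))^2*((Q (m+1)).eval (x^2))^3 + 6*d^2*x^4*y*((Q m).eval (x^2))^2*((Q (m+1)).eval (x^2))^3 + (-2)*d^3*x^6*y*((Q m).eval (x^2))^2*((Q (m+1)).eval (x^2))^3 + 2*a*d*x^3*(pts (m+1)).1*((Q m).eval (x^2))^2*((P (m+1)).eval (x^2))*((Q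 (m+1)).eval (x^2))^2 + (-4)*a*d^2*x^5*(pts (m+1)).1*((Q m).eval (x^2))^2*((P (m+1)).eval (x^2))*((Q (m+1)).eval (x^2))^2 + 2*a*d^3*x^7*(pts (m+1)).1*((Q m).eval (x^2))^2*((P (m+1)).eval (x^2))*((Q (m+1)).eval (x^2))^2 + (-2)*a^2*d*x^5*(pts (m+1)).1*((Q m).eval (x^2))^2*((P (m+1)).eval (x^2))*((Q (m+1)).eval (x^2))^2 + 4*a^2*d^2*x^7*(pts (m+1)).1*((Q m).eval (x^2))^2*((P (m+1)).eval (x^2))*((Q (m+1)).eval (x^2))^2 + (-2)*a^2*d^3*x^9*(pts (m+1)).1*((Q m).eval (x^2))^2*((P (m+1)).eval (x^2))*((Q (m+1)).eval (x^2))^2) * hu2 + (2*x*((Q m).eval (x^2))^2*((P (m+1)).eval (x^2))*((Q (m+1)).eval (x^2))^3 + (-4)*d*x^3*((Q m).eval (x^2))^2*((P (m+1)).eval (x^2))*((Q (m+1)).eval (x^2))^3 + 2*d^2*x^5*((Q m).eval (x^2))^2*((P (m+1)).eval (x^2))*((Q (m+1)).eval (x^2))^3) * hE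
        have fin := my_cancel (mul_ne_zero (mul_ne_zero (mul_ne_zero hgne hq0)
          (pow_ne_zero 2 hq1)) hnz) bigF
        linear_combination fin
      · -- middle index odd
        have hNo : Odd (m+1) := Nat.not_even_iff_odd.mp hNe
        have hmeven : Even m := by rw [Nat.even_add_one, not_not] at hNe; exact hNe
        have hm2 : Even (m+1+1) := by rw [Nat.even_add_one]; exact hNe
        have ihm : (pts m).1 = x * y * (P m).eval (x ^ 2) / (Q m).eval (x ^ 2) := by
          have h := ih.1; rwa [if_pos hmeven] at h
        have ihN : (pts (m+1)).1 = x * (P (m+1)).eval (x ^ 2) / (Q (m+1)).eval (x ^ 2) := by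
          have h := ih.2; rwa [if_neg hNe] at h
        have hxm2 : (pts m).1 * ((Q m).eval (x^2)) = x * y * ((P m).eval (x^2)) := by
          rw [ihm]; exact div_mul_cancel₀ _ hq0
        have hu2 : (pts (m+1)).1 * ((Q (m+1)).eval (x^2)) = x * ((P (m+1)).eval (x^2)) := by
          rw [ihN]; exact div_mul_cancel₀ _ hq1
        have hQrec := hQodd (m+1) (by omega) hNo
        have hPrec := hPodd (m+1) (by omega) hNo
        simp only [Nat.add_sub_cancel] at hQrec hPrec
        have bigE : (((Q (m+1)).eval (x^2)) ^ 2)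
            * ((((Q (m+1)).eval (x^2)) ^ 2
                - a * d * (x ^ 2) ^ 2 * ((P (m+1)).eval (x^2)) ^ 2)
              - ((Q (m+1)).eval (x^2)) ^ 2
                * (1 - a * d * x ^ 2 * (pts (m+1)).1 ^ 2)) = 0 := by
          linear_combination (1*a*d*x^2*(pts (m+1)).1*((Q (m+1)).eval (x^2))^3 + 1*a*d*x^3*((P (m+1)).eval (x^2))*((Q (m+1)).eval (x^2))^2) * hu2
        have hEeq := my_cancel (pow_ne_zero 2 hq1) bigE
        have hQval : (Q (m+1+1)).eval (x ^ 2)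
            = (Q m).eval (x ^ 2) * (((Q (m+1)).eval (x^2)) ^ 2
                * (1 - a * d * x ^ 2 * (pts (m+1)).1 ^ 2)) := by
          rw [hQrec]
          simp only [eval_mul, eval_sub, eval_add, eval_pow, eval_one, eval_C, eval_X]
          linear_combination ((Q m).eval (x^2)) * hEeq
        have hgne : (1 : k) - a * d * x ^ 2 * (pts (m+1)).1 ^ 2 ≠ 0 := by
          intro h0
          exact hQne (m+1+1) (by omega) (by rw [hQval, h0, mul_zero, mul_zero])
        rw [if_pos hm2, eq_div_iff (hQne (m+1+1) (by omega)), hQrec, hPrec]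
        simp only [eval_mul, eval_sub, eval_add, eval_pow, eval_one, eval_C, eval_X,
          eval_ofNat]
        have bigF : ((1 - a * d * x ^ 2 * (pts (m+1)).1 ^ 2) * ((Q m).eval (x^2))
            * ((Q (m+1)).eval (x^2)) ^ 2)
            * ((pts (m+1+1)).1 * (((Q m).eval (x^2)) * (((Q (m+1)).eval (x^2)) ^ 2
                - a * d * (x ^ 2) ^ 2 * ((P (m+1)).eval (x^2)) ^ 2))
              - x * y * (2 * (1 - d * x ^ 2) * ((P (m+1)).eval (x^2))
                  * ((Q m).eval (x^2)) * ((Q (m+1)).eval (x^2))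
                - ((P m).eval (x^2)) * (((Q (m+1)).eval (x^2)) ^ 2
                  - a * d * (x ^ 2) ^ 2 * ((P (m+1)).eval (x^2)) ^ 2))) = 0 := by
          linear_combination (1*((Q m).eval (x^2))^2*((Q (m+1)).eval (x^2))^4 + (-1)*a*d*x^4*((Q m).eval (x^2))^2*((P (m+1)).eval (x^2))^2*((Q (m+1)).eval (x^2))^2) * hkey + ((-1)*((Q m).eval (x^2))*((Q (m+1)).eval (x^2))^4 + 1*a*d*x^2*(pts (m+1)).1^2*((Q m).eval (x^2))*((Q (m+1)).eval (x^2))^4 + 1*a*d*x^4*((Q m).eval (x^2))*((P (m+1)).eval (x^2))^2*((Q (m+1)).eval (x^2))^2 + (-1)*a^2*d^2*x^6*(pts (m+1)).1^2*((Q m).eval (x^2))*((P (m+1)).eval (x^2))^2*((Q (m+1)).eval (x^2))^2) * hxm2 + (2*y*((Q m).eval (x^2))^2*((Q (m+1)).eval (x^2))^3 + (-2)*d*x^2*y*((Q m).eval (x^2))^2*((Q (m+1)).eval (x^2))^3 + 2*a*d*x^3*y*(pts (m+1)).1*((Q m).eval (x^2))^2*((P (m+1)).eval (x^2))*((Q (m+1)).eval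 (x^2))^2 + (-2)*a*d^2*x^5*y*(pts (m+1)).1*((Q m).eval (x^2))^2*((P (m+1)).eval (x^2))*((Q (m+1)).eval (x^2))^2) * hu2
        have fin := my_cancel (mul_ne_zero (mul_ne_zero hgne hq0)
          (pow_ne_zero 2 hq1)) bigF
        linear_combination fin
  exact fun n hn => (main n hn).1
end

section
/- On the Edwards curve x² + y² + x²y² = 1 (the case a = 1, d = −1 of a twisted Edwards curve after rewriting), doubling a point (s,c) gives the point with x-coordinate 2sc(c²+1)/(c⁴+1) and y-coordinate (−c⁴ − 2c² + 1)/(c⁴ − 2c² − 1), provided c⁴ + 1 ≠ 0 and c⁴ − 2c² − 1 ≠ 0. -/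
/-- doubling on Gauss's curve s² + c² + s²c² = 1 (the Edwards
curve with a = 1, d = −1). -/
theorem gauss_curve_doubling {k : Type*} [Field k] (s c : k)
    (hchar : (2 : k) ≠ 0)
    (hE : s ^ 2 + c ^ 2 + s ^ 2 * c ^ 2 = 1)
    (h1 : c ^ 4 + 1 ≠ 0) (h2 : c ^ 4 - 2 * c ^ 2 - 1 ≠ 0) :
    (s * c + s * c) / (1 - s * s * c * c) = 2 * s * c * (c ^ 2 + 1) / (c ^ 4 + 1) ∧
    (c * c - s * s) / (1 + s * s * c * c)
      = (-c ^ 4 - 2 * c ^ 2 + 1) / (c ^ 4 - 2 * c ^ 2 - 1) := by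
  have hc : (1 : k) + c ^ 2 ≠ 0 := by
    intro h
    apply hchar
    linear_combination (s ^ 2 + 1) * h - hE
  have e1 : (1 - s * s * c * c) * (1 + c ^ 2) = c ^ 4 + 1 := by
    linear_combination (-c ^ 2) * hE
  have e2 : (1 + s * s * c * c) * (1 + c ^ 2) = -(c ^ 4 - 2 * c ^ 2 - 1) := by
    linear_combination c ^ 2 * hE
  have hd1 : 1 - s * s * c * c ≠ 0 := by
    intro h; apply h1; rw [← e1, h, zero_mul]
  have hd2 : 1 + s * s * c * c ≠ 0 := by
    intro h
    apply h2
    have := e2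
    rw [h, zero_mul] at this
    linear_combination this
  constructor
  · rw [div_eq_div_iff hd1 h1]
    linear_combination 2 * s * c ^ 3 * hE
  · rw [div_eq_div_iff hd2 h2]
    linear_combination (c ^ 4 + 1) * hE
end
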